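/- arXiv:2208.09806 — 4 statements merged into one kernel-verified Lean document; each statement's English description precedes it below -/
import Mathlib

section
/- Let f : ℕ → ℂ be an arithmetic function and suppose there exist constants C > 0 and α ∈ (0,1) such that |S(x,t)| ≤ C·x^α for all real x ≥ 1 and all t ∈ ℝ. Then the series F(t) = Σ_{n=1}^∞ f(n)e^{2πint}/n converges for every t ∈ ℝ, and F is Hölder continuous with exponent 1−α: there exists a constant C₁ > 0 such that |F(s) − F(t)| ≤ C₁·|s−t|^{1−α} for all s, t ∈ ℝ. Moreover, the same Hölder estimate (with the same exponent 1−α) holds for the real-valued functions t ↦ |F(t)|, t ↦ Re F(t), and t ↦ Im F(t). -/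
set_option maxHeartbeats 1000000
open Filter Finset Topology

lemma tail_rpow {α : ℝ} (hα1 : α < 1) (N : ℕ) (hN : 1 ≤ N) :
    ∑' k : ℕ, ((k + N : ℕ) : ℝ) ^ (α - 2) ≤ (1 + 1/(1-α)) * (N : ℝ) ^ (α - 1) := by
  have hNR : (1:ℝ) ≤ (N:ℝ) := by exact_mod_cast hN
  have hNpos : (0:ℝ) < N := by linarith
  apply Real.tsum_le_of_sum_range_le
  · intro n; positivity
  · intro M
    match M with
    | 0 =>
      simp only [Finset.range_zero, Finset.sum_empty]
      have h1 : (0:ℝ) < 1 - α := by linarith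
      have : (0:ℝ) ≤ 1 + 1/(1-α) := by positivity
      exact mul_nonneg this (Real.rpow_nonneg (le_of_lt hNpos) _)
    | (M+1) =>
      rw [Finset.sum_range_succ']
      have h0 : ((0 + N : ℕ) : ℝ) ^ (α - 2) ≤ (N:ℝ) ^ (α - 1) := by
        simp only [Nat.zero_add]
        exact Real.rpow_le_rpow_of_exponent_le hNR (by linarith)
      have hanti : AntitoneOn (fun x : ℝ => x ^ (α - 2)) (Set.Icc (N:ℝ) ((N:ℝ) + M)) := by
        intro x hx y hy hxy
        exact Real.rpow_le_rpow_of_nonpos (lt_of_lt_of_le hNpos hx.1) hxy (by linarith)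
      have hint := hanti.sum_le_integral
      have hsum : ∑ i ∈ Finset.range M, (((i+1) + N : ℕ) : ℝ) ^ (α - 2)
          ≤ ∫ x in (N:ℝ)..((N:ℝ) + M), x ^ (α - 2) := by
        refine le_trans (le_of_eq ?_) hint
        apply Finset.sum_congr rfl
        intro i _
        push_cast
        ring_nf
      have hInt : (∫ x in (N:ℝ)..((N:ℝ) + M), x ^ (α - 2))
          = (((N:ℝ)+M) ^ (α - 1) - (N:ℝ) ^ (α-1)) / (α - 1) := by
        rw [integral_rpow]
        · ring_nf
        · right
          constructor
          · intro h; linarith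
          · intro h
            rw [Set.mem_uIcc] at h
            rcases h with h | h <;> [skip; skip] <;> push_cast at h <;> nlinarith [Nat.cast_nonneg (α := ℝ) M]
      have hIle : (∫ x in (N:ℝ)..((N:ℝ) + M), x ^ (α - 2)) ≤ (N:ℝ)^(α-1) / (1 - α) := by
        rw [hInt]
        have h1 : (0:ℝ) ≤ ((N:ℝ)+M) ^ (α - 1) := Real.rpow_nonneg (by positivity) _
        have heq : (((N:ℝ)+M) ^ (α - 1) - (N:ℝ) ^ (α-1)) / (α - 1)
            = ((N:ℝ)^(α-1) - ((N:ℝ)+M)^(α-1)) / (1-α) := by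
          rw [div_eq_div_iff (by linarith) (by linarith)]; ring
        rw [heq]
        have h2 : (N:ℝ)^(α-1) - ((N:ℝ)+M)^(α-1) ≤ (N:ℝ)^(α-1) := sub_le_self _ h1
        exact div_le_div_of_nonneg_right h2 (by linarith) |>.trans_eq rfl
      calc ∑ i ∈ Finset.range M, (((i+1) + N : ℕ) : ℝ) ^ (α - 2) + ((0 + N : ℕ):ℝ) ^ (α-2)
          ≤ (N:ℝ)^(α-1)/(1-α) + (N:ℝ)^(α-1) := add_le_add (le_trans hsum hIle) h0
        _ = (1 + 1/(1-α)) * (N : ℝ) ^ (α - 1) := by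
            have h1α : (1:ℝ) - α ≠ 0 := by linarith
            field_simp
            ring

noncomputable def ee (n : ℕ) (t : ℝ) : ℂ := Complex.exp (2 * Real.pi * Complex.I * (n : ℂ) * (t : ℂ))

noncomputable def SS (f : ℕ → ℂ) (N : ℕ) (t : ℝ) : ℂ := ∑ n ∈ Finset.Icc 1 N, f n * ee n t

lemma ee_cont (n : ℕ) : Continuous fun u : ℝ => ee n u := by
  unfold ee; fun_prop

lemma SS_cont (f : ℕ → ℂ) (N : ℕ) : Continuous fun u : ℝ => SS f N u := by
  unfold SS
  exact continuous_finset_sum _ (fun n _ => continuous_const.mul (ee_cont n))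

lemma key_identity (f : ℕ → ℂ) (N : ℕ) (s t : ℝ) :
    ∑ n ∈ Finset.Icc 1 N, f n * ee n s / (n:ℂ) - ∑ n ∈ Finset.Icc 1 N, f n * ee n t / (n:ℂ)
      = (2 * Real.pi * Complex.I) * ∫ u in t..s, SS f N u := by
  have hInt : (∫ u in t..s, SS f N u)
      = ∑ n ∈ Finset.Icc 1 N, ∫ u in t..s, f n * ee n u := by
    unfold SS
    exact intervalIntegral.integral_finset_sum
      (fun n _ => (continuous_const.mul (ee_cont n)).intervalIntegrable _ _)
  have per : ∀ n ∈ Finset.Icc 1 N, (∫ u in t..s, f n * ee n u)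
      = f n * ((ee n s - ee n t) / (2 * Real.pi * Complex.I * (n:ℂ))) := by
    intro n hn
    rw [intervalIntegral.integral_const_mul]
    congr 1
    have hn1 : 1 ≤ n := (Finset.mem_Icc.mp hn).1
    have hc : (2 * (Real.pi:ℂ) * Complex.I * (n:ℂ)) ≠ 0 := by
      apply mul_ne_zero
      apply mul_ne_zero
      apply mul_ne_zero
      · norm_num
      · exact_mod_cast Complex.ofReal_ne_zero.mpr Real.pi_ne_zero
      · exact Complex.I_ne_zero
      · exact Nat.cast_ne_zero.mpr (by omega)
    exact integral_exp_mul_complex hc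
  rw [hInt, Finset.mul_sum, ← Finset.sum_sub_distrib]
  apply Finset.sum_congr rfl
  intro n hn
  rw [per n hn]
  have hn1 : 1 ≤ n := (Finset.mem_Icc.mp hn).1
  have hπ : (Real.pi : ℂ) ≠ 0 := Complex.ofReal_ne_zero.mpr Real.pi_ne_zero
  have hnc : (n:ℂ) ≠ 0 := Nat.cast_ne_zero.mpr (by omega)
  field_simp

lemma key_bound {f : ℕ → ℂ} {C α : ℝ} (hC : 0 < C)
    (hSN : ∀ N : ℕ, 1 ≤ N → ∀ t : ℝ, ‖SS f N t‖ ≤ C * (N:ℝ)^α)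
    {N : ℕ} (hN : 1 ≤ N) (s t : ℝ) :
    ‖∑ n ∈ Finset.Icc 1 N, f n * ee n s / (n:ℂ)
      - ∑ n ∈ Finset.Icc 1 N, f n * ee n t / (n:ℂ)‖
      ≤ 2 * Real.pi * C * (N:ℝ)^α * |s - t| := by
  rw [key_identity, norm_mul]
  have h1 : ‖(2 * (Real.pi:ℂ) * Complex.I)‖ = 2 * Real.pi := by
    rw [norm_mul, norm_mul, Complex.norm_I]
    simp [Complex.norm_real, abs_of_nonneg Real.pi_nonneg]
  have h2 : ‖∫ u in t..s, SS f N u‖ ≤ C * (N:ℝ)^α * |s - t| :=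
    intervalIntegral.norm_integral_le_of_norm_le_const (fun u _ => hSN N hN u)
  calc ‖(2 * (Real.pi:ℂ) * Complex.I)‖ * ‖∫ u in t..s, SS f N u‖
      = 2 * Real.pi * ‖∫ u in t..s, SS f N u‖ := by rw [h1]
    _ ≤ 2 * Real.pi * (C * (N:ℝ)^α * |s - t|) := by
        apply mul_le_mul_of_nonneg_left h2 (by positivity)
    _ = 2 * Real.pi * C * (N:ℝ)^α * |s - t| := by ring


noncomputable def gg (f : ℕ → ℂ) (t : ℝ) (n : ℕ) : ℂ := SS f n t / ((n:ℂ) * ((n:ℂ)+1))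

lemma abel_sum (f : ℕ → ℂ) (t : ℝ) (N : ℕ) :
    ∑ n ∈ Finset.Icc 1 N, f n * ee n t / (n : ℂ)
      = SS f N t / N + ∑ n ∈ Finset.range N, SS f n t / ((n : ℂ) * ((n : ℂ) + 1)) := by
  induction N with
  | zero => simp [SS]
  | succ N ih =>
    rw [Finset.sum_Icc_succ_top (by omega), ih, Finset.sum_range_succ]
    have hS : SS f (N+1) t = SS f N t + f (N+1) * ee (N+1) t := by
      rw [SS, Finset.sum_Icc_succ_top (by omega)]; rfl
    rcases Nat.eq_zero_or_pos N with h0 | hpos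
    · subst h0; simp [SS, hS]
    · have hN : (N : ℂ) ≠ 0 := Nat.cast_ne_zero.mpr (by omega)
      have hN1 : (N : ℂ) + 1 ≠ 0 := by
        have : ((N+1 : ℕ) : ℂ) ≠ 0 := Nat.cast_ne_zero.mpr (by omega)
        push_cast at this; exact this
      rw [hS]
      push_cast
      field_simp
      ring

section main
variable {f : ℕ → ℂ} {C α : ℝ}

lemma rpow_helper {n : ℕ} (hn : 1 ≤ n) : (n:ℝ)^(α-2) = (n:ℝ)^α / ((n:ℝ)*(n:ℝ)) := by
  have hnpos : (0:ℝ) < n := by exact_mod_cast hn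
  rw [Real.rpow_sub hnpos]
  congr 1
  rw [show (2:ℝ) = ((2:ℕ):ℝ) by norm_num, Real.rpow_natCast]
  ring

lemma gbound (hC : 0 < C) (hα1 : α < 1)
    (hSN : ∀ N : ℕ, 1 ≤ N → ∀ t : ℝ, ‖SS f N t‖ ≤ C * (N:ℝ)^α) :
    ∀ t : ℝ, ∀ n : ℕ, ‖gg f t n‖ ≤ C * (n:ℝ)^(α-2) := by
  intro t n
  rcases Nat.eq_zero_or_pos n with h0 | hpos
  · subst h0
    simp [gg, SS, Real.zero_rpow (show α - 2 ≠ 0 by intro h; linarith)]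
  · have hnR : (1:ℝ) ≤ (n:ℝ) := by exact_mod_cast hpos
    have hnpos : (0:ℝ) < n := by linarith
    have hden : ‖((n:ℂ) * ((n:ℂ)+1))‖ = (n:ℝ) * ((n:ℝ)+1) := by
      rw [norm_mul]
      have h1 : ‖(n:ℂ)‖ = (n:ℝ) := by simp
      have h2 : ‖((n:ℂ)+1)‖ = (n:ℝ)+1 := by
        rw [show ((n:ℂ)+1) = ((n+1:ℕ):ℂ) by push_cast; ring, Complex.norm_natCast]
        push_cast; ring
      rw [h1, h2]
    rw [gg, norm_div, hden, rpow_helper hpos]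
    have h1 : ‖SS f n t‖ / ((n:ℝ) * ((n:ℝ)+1)) ≤ (C * (n:ℝ)^α) / ((n:ℝ) * ((n:ℝ)+1)) := by
      apply div_le_div_of_nonneg_right (hSN n hpos t) (by positivity) |>.trans_eq rfl
    refine h1.trans ?_
    rw [div_le_div_iff₀ (by positivity) (by positivity)] at *
    have hpow : (0:ℝ) ≤ C * (n:ℝ)^α := by positivity
    rw [mul_div_assoc]
    apply mul_le_mul_of_nonneg_left _ (le_of_lt hC)
    apply div_le_div_of_nonneg_left (by positivity) (by positivity)
    nlinarith

lemma gsummable (hC : 0 < C) (hα1 : α < 1)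
    (hSN : ∀ N : ℕ, 1 ≤ N → ∀ t : ℝ, ‖SS f N t‖ ≤ C * (N:ℝ)^α) (t : ℝ) :
    Summable (gg f t) := by
  apply Summable.of_norm_bounded ((Real.summable_nat_rpow.mpr (by linarith : α - 2 < -1)).mul_left C)
  exact gbound hC hα1 hSN t


noncomputable def FF (f : ℕ → ℂ) (t : ℝ) : ℂ := ∑' n, gg f t n

lemma SS_div_bound (hα1 : α < 1)
    (hSN : ∀ N : ℕ, 1 ≤ N → ∀ t : ℝ, ‖SS f N t‖ ≤ C * (N:ℝ)^α)
    {N : ℕ} (hN : 1 ≤ N) (t : ℝ) : ‖SS f N t / (N:ℂ)‖ ≤ C * (N:ℝ)^(α-1) := by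
  have hnR : (1:ℝ) ≤ (N:ℝ) := by exact_mod_cast hN
  have hnpos : (0:ℝ) < N := by linarith
  rw [norm_div, Complex.norm_natCast]
  have : (N:ℝ)^(α-1) = (N:ℝ)^α / (N:ℝ) := by
    rw [Real.rpow_sub hnpos, Real.rpow_one]
  rw [this, ← mul_div_assoc]
  exact div_le_div_of_nonneg_right (hSN N hN t) hnpos.le

lemma SS_div_tendsto (hC : 0 < C) (hα1 : α < 1)
    (hSN : ∀ N : ℕ, 1 ≤ N → ∀ t : ℝ, ‖SS f N t‖ ≤ C * (N:ℝ)^α) (t : ℝ) :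
    Tendsto (fun N : ℕ => SS f N t / (N:ℂ)) atTop (𝓝 0) := by
  have hb : Tendsto (fun N : ℕ => C * (N:ℝ)^(α-1)) atTop (𝓝 0) := by
    have h1 : Tendsto (fun x : ℝ => x ^ (-(1-α))) atTop (𝓝 0) :=
      tendsto_rpow_neg_atTop (by linarith)
    have h2 : Tendsto (fun N : ℕ => ((N:ℝ)) ^ (α-1)) atTop (𝓝 0) := by
      have h3 := h1.comp (tendsto_natCast_atTop_atTop (R := ℝ))
      simp only [Function.comp_def] at h3
      convert h3 using 2 with N
      congr 1
      ring
    have := h2.const_mul C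
    simpa using this
  apply squeeze_zero_norm' _ hb
  filter_upwards [eventually_ge_atTop 1] with N hN
  exact SS_div_bound hα1 hSN hN t

lemma conv (hC : 0 < C) (hα1 : α < 1)
    (hSN : ∀ N : ℕ, 1 ≤ N → ∀ t : ℝ, ‖SS f N t‖ ≤ C * (N:ℝ)^α) (t : ℝ) :
    Tendsto (fun N : ℕ => ∑ n ∈ Finset.Icc 1 N, f n * ee n t / (n : ℂ))
      atTop (𝓝 (FF f t)) := by
  have hG : Tendsto (fun N : ℕ => ∑ n ∈ Finset.range N, gg f t n) atTop (𝓝 (FF f t)) :=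
    (gsummable hC hα1 hSN t).hasSum.tendsto_sum_nat
  have h0 := SS_div_tendsto hC hα1 hSN t
  have := h0.add hG
  rw [zero_add] at this
  convert this using 2 with N
  rw [abel_sum]
  rfl

lemma tailbound (hC : 0 < C) (hα0 : 0 < α) (hα1 : α < 1)
    (hSN : ∀ N : ℕ, 1 ≤ N → ∀ t : ℝ, ‖SS f N t‖ ≤ C * (N:ℝ)^α)
    (t : ℝ) {N : ℕ} (hN : 1 ≤ N) :
    ‖FF f t - ∑ n ∈ Finset.range N, gg f t n‖ ≤ C * (1 + 1/(1-α)) * (N:ℝ)^(α-1) := by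
  have hsum := gsummable hC hα1 hSN t
  have hid := Summable.sum_add_tsum_nat_add (f := gg f t) N hsum
  have hnormfull : Summable (fun n => ‖gg f t n‖) := by
    apply Summable.of_nonneg_of_le (fun n => norm_nonneg _) (gbound hC hα1 hSN t)
    exact (Real.summable_nat_rpow.mpr (by linarith : α - 2 < -1)).mul_left C
  have h1 : FF f t - ∑ n ∈ Finset.range N, gg f t n = ∑' k, gg f t (k + N) := by
    have hF : FF f t = ∑ n ∈ Finset.range N, gg f t n + ∑' k, gg f t (k + N) := hid.symm
    rw [hF]; ring
  rw [h1]
  have hnorm_sum : Summable (fun k => ‖gg f t (k + N)‖) :=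
    (summable_nat_add_iff N).mpr hnormfull
  refine (norm_tsum_le_tsum_norm hnorm_sum).trans ?_
  have hb : Summable (fun k : ℕ => C * ((k + N : ℕ):ℝ)^(α-2)) := by
    have : Summable (fun n : ℕ => C * ((n:ℝ))^(α-2)) :=
      (Real.summable_nat_rpow.mpr (by linarith : α - 2 < -1)).mul_left C
    exact (summable_nat_add_iff N).mpr this
  refine (Summable.tsum_le_tsum (fun k => gbound hC hα1 hSN t (k+N)) hnorm_sum hb).trans ?_
  rw [tsum_mul_left]
  rw [mul_assoc]
  exact mul_le_mul_of_nonneg_left (tail_rpow hα1 N hN) (le_of_lt hC)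

end main

/-- If the exponential sums `S(x,t) = ∑_{1 ≤ n ≤ x} f(n) e^{2πint}` satisfy
`|S(x,t)| ≤ C x^α` uniformly, then `F(t) = ∑ f(n) e^{2πint}/n` converges and is Hölder
continuous with exponent `1 - α`, and likewise for `|F|`, `Re F`, `Im F`. -/
theorem stmt_0 (f : ℕ → ℂ) (C α : ℝ) (hC : 0 < C) (hα0 : 0 < α) (hα1 : α < 1)
    (hS : ∀ x : ℝ, 1 ≤ x → ∀ t : ℝ,
      ‖∑ n ∈ Finset.Icc 1 ⌊x⌋₊,
        f n * Complex.exp (2 * Real.pi * Complex.I * (n : ℂ) * (t : ℂ))‖ ≤ C * x ^ α) :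
    ∃ F : ℝ → ℂ,
      (∀ t : ℝ, Tendsto (fun N : ℕ => ∑ n ∈ Finset.Icc 1 N,
          f n * Complex.exp (2 * Real.pi * Complex.I * (n : ℂ) * (t : ℂ)) / (n : ℂ))
        atTop (𝓝 (F t))) ∧
      ∃ C₁ : ℝ, 0 < C₁ ∧
        (∀ s t : ℝ, ‖F s - F t‖ ≤ C₁ * |s - t| ^ (1 - α)) ∧
        (∀ s t : ℝ, |‖F s‖ - ‖F t‖| ≤ C₁ * |s - t| ^ (1 - α)) ∧
        (∀ s t : ℝ, |(F s).re - (F t).re| ≤ C₁ * |s - t| ^ (1 - α)) ∧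
        (∀ s t : ℝ, |(F s).im - (F t).im| ≤ C₁ * |s - t| ^ (1 - α)) := by
  have h1α : (0:ℝ) < 1 - α := by linarith
  have hSN : ∀ N : ℕ, 1 ≤ N → ∀ t : ℝ, ‖SS f N t‖ ≤ C * (N:ℝ)^α := by
    intro N hN t
    have := hS (N:ℝ) (by exact_mod_cast hN) t
    rw [Nat.floor_natCast] at this
    exact this
  set K : ℝ := 1 + 1/(1-α) with hK
  have hKpos : 0 < K := by rw [hK]; positivity
  set A : ℝ := ∑' n : ℕ, (n:ℝ)^(α-2) with hA
  have hAsum : Summable (fun n : ℕ => (n:ℝ)^(α-2)) :=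
    Real.summable_nat_rpow.mpr (by linarith : α - 2 < -1)
  have hAnn : 0 ≤ A := tsum_nonneg (fun n => Real.rpow_nonneg (Nat.cast_nonneg n) _)
  have hnormfull : ∀ t, Summable (fun n => ‖gg f t n‖) := by
    intro t
    apply Summable.of_nonneg_of_le (fun n => norm_nonneg _) (gbound hC hα1 hSN t)
    exact hAsum.mul_left C
  have hFbound : ∀ t : ℝ, ‖FF f t‖ ≤ C * A := by
    intro t
    refine (norm_tsum_le_tsum_norm (hnormfull t)).trans ?_
    refine (Summable.tsum_le_tsum (gbound hC hα1 hSN t) (hnormfull t) (hAsum.mul_left C)).trans ?_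
    rw [tsum_mul_left]
  set B₁ : ℝ := 4*C*(K+1) + 2*Real.pi*C with hB₁
  set B₂ : ℝ := 2*C*A with hB₂
  set C₁ : ℝ := B₁ + B₂ + 1 with hC₁
  have hB₁pos : 0 < B₁ := by rw [hB₁]; positivity
  have hB₂nn : 0 ≤ B₂ := by rw [hB₂]; positivity
  have hC₁pos : 0 < C₁ := by rw [hC₁]; positivity
  have holder : ∀ s t : ℝ, ‖FF f s - FF f t‖ ≤ C₁ * |s - t| ^ (1 - α) := by
    intro s t
    set δ : ℝ := |s - t| with hδ
    rcases eq_or_lt_of_le (abs_nonneg (s - t)) with h0 | hδpos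
    · have hst : s = t := by
        have : s - t = 0 := abs_eq_zero.mp h0.symm
        linarith
      rw [hst, sub_self, norm_zero]
      positivity
    · rcases le_or_gt 1 δ with hbig | hsmall
      · have hub : ‖FF f s - FF f t‖ ≤ B₂ := by
          calc ‖FF f s - FF f t‖ ≤ ‖FF f s‖ + ‖FF f t‖ := norm_sub_le _ _
            _ ≤ C * A + C * A := add_le_add (hFbound s) (hFbound t)
            _ = B₂ := by rw [hB₂]; ring
        have hδ1 : 1 ≤ δ ^ (1 - α) := Real.one_le_rpow hbig (le_of_lt h1α)
        calc ‖FF f s - FF f t‖ ≤ B₂ := hub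
          _ = B₂ * 1 := by ring
          _ ≤ C₁ * δ ^ (1 - α) := by
              apply mul_le_mul _ hδ1 zero_le_one (le_of_lt hC₁pos)
              rw [hC₁]; linarith
      · -- 0 < δ < 1
        set N : ℕ := ⌊1/δ⌋₊ with hNdef
        have h1δ : (1:ℝ) ≤ 1/δ := by
          exact one_le_one_div hδpos hsmall.le
        have hN1 : 1 ≤ N := by
          rw [hNdef]
          exact Nat.le_floor (by exact_mod_cast h1δ)
        have hNRpos : (0:ℝ) < N := by exact_mod_cast hN1
        have hNle : (N:ℝ) ≤ 1/δ := Nat.floor_le (by positivity)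
        have hNge : 1/δ < (N:ℝ) + 1 := Nat.lt_floor_add_one _
        have hNR1 : (1:ℝ) ≤ (N:ℝ) := by exact_mod_cast hN1
        have hδα : (1/δ)^α = δ^(-α) := by
          rw [one_div, Real.inv_rpow hδpos.le, ← Real.rpow_neg hδpos.le]
        have hNα : (N:ℝ)^α ≤ δ^(-α) := by
          rw [← hδα]
          exact Real.rpow_le_rpow (le_of_lt hNRpos) hNle (le_of_lt hα0)
        have hmulδ : δ^(-α) * δ = δ^(1-α) := by
          nth_rewrite 2 [← Real.rpow_one δ]
          rw [← Real.rpow_add hδpos]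
          congr 1
          ring
        have hNinv : 1/(N:ℝ) ≤ 2*δ := by
          rw [div_le_iff₀ hNRpos]
          have h2N : 1/δ < 2*(N:ℝ) := by linarith
          have := (div_lt_iff₀ hδpos).mp h2N
          nlinarith
        have hNα1 : (N:ℝ)^(α-1) ≤ 2*δ^(1-α) := by
          have e1 : (N:ℝ)^(α-1) = (N:ℝ)^α * (1/(N:ℝ)) := by
            rw [Real.rpow_sub hNRpos, Real.rpow_one]
            ring
          rw [e1]
          calc (N:ℝ)^α * (1/(N:ℝ)) ≤ δ^(-α) * (2*δ) :=
              mul_le_mul hNα hNinv (by positivity) (Real.rpow_nonneg hδpos.le _)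
            _ = 2*(δ^(-α)*δ) := by ring
            _ = 2*δ^(1-α) := by rw [hmulδ]
        have hNαδ : (N:ℝ)^α * δ ≤ δ^(1-α) := by
          calc (N:ℝ)^α * δ ≤ δ^(-α) * δ := mul_le_mul_of_nonneg_right hNα hδpos.le
            _ = δ^(1-α) := hmulδ
        have hPF : ∀ u : ℝ, ‖FF f u - ∑ n ∈ Finset.Icc 1 N, f n * ee n u / (n:ℂ)‖
            ≤ C*(K+1)*(N:ℝ)^(α-1) := by
          intro u
          rw [abel_sum]
          have hre : FF f u - (SS f N u / N + ∑ n ∈ Finset.range N, SS f n u / ((n:ℂ)*((n:ℂ)+1)))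
              = (FF f u - ∑ n ∈ Finset.range N, gg f u n) - SS f N u / (N:ℂ) := by
            simp only [gg]
            ring
          rw [hre]
          have htail : ‖FF f u - ∑ n ∈ Finset.range N, gg f u n‖ ≤ C*K*(N:ℝ)^(α-1) := by
            rw [hK, mul_assoc]
            rw [← mul_assoc]
            exact tailbound hC hα0 hα1 hSN u hN1
          calc ‖(FF f u - ∑ n ∈ Finset.range N, gg f u n) - SS f N u / (N:ℂ)‖
              ≤ ‖FF f u - ∑ n ∈ Finset.range N, gg f u n‖ + ‖SS f N u / (N:ℂ)‖ :=
                norm_sub_le _ _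
            _ ≤ C*K*(N:ℝ)^(α-1) + C*(N:ℝ)^(α-1) :=
                add_le_add htail (SS_div_bound hα1 hSN hN1 u)
            _ = C*(K+1)*(N:ℝ)^(α-1) := by ring
        have hdecomp : FF f s - FF f t
            = (FF f s - ∑ n ∈ Finset.Icc 1 N, f n * ee n s / (n:ℂ))
              + (∑ n ∈ Finset.Icc 1 N, f n * ee n s / (n:ℂ)
                 - ∑ n ∈ Finset.Icc 1 N, f n * ee n t / (n:ℂ))
              + (∑ n ∈ Finset.Icc 1 N, f n * ee n t / (n:ℂ) - FF f t) := by ring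
        have hXnn : 0 ≤ δ^(1-α) := Real.rpow_nonneg hδpos.le _
        calc ‖FF f s - FF f t‖
            ≤ ‖FF f s - ∑ n ∈ Finset.Icc 1 N, f n * ee n s / (n:ℂ)‖
              + ‖∑ n ∈ Finset.Icc 1 N, f n * ee n s / (n:ℂ)
                 - ∑ n ∈ Finset.Icc 1 N, f n * ee n t / (n:ℂ)‖
              + ‖∑ n ∈ Finset.Icc 1 N, f n * ee n t / (n:ℂ) - FF f t‖ := by
              rw [hdecomp]
              exact norm_add₃_le
          _ ≤ C*(K+1)*(N:ℝ)^(α-1) + 2*Real.pi*C*(N:ℝ)^α*δ + C*(K+1)*(N:ℝ)^(α-1) := by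
              refine add_le_add (add_le_add (hPF s) (key_bound hC hSN hN1 s t)) ?_
              rw [norm_sub_rev]
              exact hPF t
          _ ≤ C*(K+1)*(2*δ^(1-α)) + 2*Real.pi*C*δ^(1-α) + C*(K+1)*(2*δ^(1-α)) := by
              have hc1 : 0 ≤ C*(K+1) := by positivity
              have hc2 : 0 ≤ 2*Real.pi*C := by positivity
              have hm : 2*Real.pi*C*(N:ℝ)^α*δ ≤ 2*Real.pi*C*δ^(1-α) := by
                rw [mul_assoc]
                exact mul_le_mul_of_nonneg_left hNαδ hc2
              have hm2 : C*(K+1)*(N:ℝ)^(α-1) ≤ C*(K+1)*(2*δ^(1-α)) :=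
                mul_le_mul_of_nonneg_left hNα1 hc1
              linarith
          _ = B₁ * δ^(1-α) := by rw [hB₁]; ring
          _ ≤ C₁ * δ^(1-α) := by
              apply mul_le_mul_of_nonneg_right _ hXnn
              rw [hC₁]
              linarith
  refine ⟨FF f, fun t => conv hC hα1 hSN t, C₁, hC₁pos, ?_, ?_, ?_, ?_⟩
  · intro s t
    exact holder s t
  · intro s t
    exact (abs_norm_sub_norm_le _ _).trans (holder s t)
  · intro s t
    have h1 : |(FF f s).re - (FF f t).re| ≤ ‖FF f s - FF f t‖ := by
      simpa [Complex.sub_re] using Complex.abs_re_le_norm (FF f s - FF f t)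
    refine h1.trans ?_
    exact holder s t
  · intro s t
    have h1 : |(FF f s).im - (FF f t).im| ≤ ‖FF f s - FF f t‖ := by
      simpa [Complex.sub_im] using Complex.abs_im_le_norm (FF f s - FF f t)
    refine h1.trans ?_
    exact holder s t
end

section
/- Let f : ℕ → ℂ be an arithmetic function and suppose there exist constants C > 0 and α ∈ (0,1) such that |S(x,t)| ≤ C·x^α for all real x ≥ 1 and all t ∈ ℝ. Then there exists a constant C' > 0 (depending only on C and α) such that for every t ∈ ℝ, every h > 0, and every positive integer N, |F_N(t+h) − F_N(t)| ≤ C'·h·N^{α}. -/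
open Filter Finset Topology

private lemma expI_abs (θ : ℝ) : ‖Complex.exp ((θ : ℂ) * Complex.I)‖ = 1 :=
  Complex.norm_exp_ofReal_mul_I θ

private lemma expI_sub_one (θ : ℝ) :
    ‖Complex.exp ((θ : ℂ) * Complex.I) - 1‖ ≤ 2 * |θ| := by
  have h1 : ‖(θ : ℂ) * Complex.I‖ = |θ| := by
    rw [norm_mul, Complex.norm_I, Complex.norm_real, Real.norm_eq_abs, mul_one]
  rcases le_or_gt (|θ|) 1 with hθ | hθ
  · have h2 := Complex.norm_exp_sub_one_le (x := (θ : ℂ) * Complex.I) (by rw [h1]; exact hθ)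
    rwa [h1] at h2
  · calc ‖Complex.exp ((θ : ℂ) * Complex.I) - 1‖
        ≤ ‖Complex.exp ((θ : ℂ) * Complex.I)‖ + ‖(1:ℂ)‖ :=
          norm_sub_le _ _
    _ = 2 := by rw [expI_abs, norm_one]; norm_num
    _ ≤ 2 * |θ| := by nlinarith

private lemma abel_id (b w : ℕ → ℂ) (n : ℕ) :
    ∑ m ∈ Finset.Icc 1 n, w m * b m =
      w n * (∑ m ∈ Finset.Icc 1 n, b m) -
        ∑ m ∈ Finset.range n, (w (m + 1) - w m) * (∑ j ∈ Finset.Icc 1 m, b j) := by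
  induction n with
  | zero => simp
  | succ n ih =>
    rw [Finset.sum_Icc_succ_top (Nat.succ_le_succ (Nat.zero_le n)),
      Finset.sum_Icc_succ_top (Nat.succ_le_succ (Nat.zero_le n)),
      Finset.sum_range_succ, ih]
    ring

private lemma abel_bound (b w : ℕ → ℂ) (n : ℕ) :
    ‖∑ m ∈ Finset.Icc 1 n, w m * b m‖ ≤
      ‖w n‖ * ‖∑ m ∈ Finset.Icc 1 n, b m‖ +
        ∑ m ∈ Finset.range n,
          ‖w (m + 1) - w m‖ * ‖∑ j ∈ Finset.Icc 1 m, b j‖ := by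
  rw [abel_id]
  refine (norm_sub_le _ _).trans ?_
  gcongr
  · exact (norm_mul _ _).le
  · exact (norm_sum_le _ _).trans (le_of_eq (by
      refine Finset.sum_congr rfl fun m _ => ?_
      exact norm_mul _ _))

private lemma bernoulli_step {α : ℝ} (hα0 : 0 < α) (hα1 : α < 1) (i : ℕ) :
    α * ((i : ℝ) + 1) ^ (α - 1) ≤ ((i : ℝ) + 1) ^ α - (i : ℝ) ^ α := by
  set x : ℝ := (i : ℝ) + 1 with hx
  have hi0 : (0 : ℝ) ≤ (i : ℝ) := Nat.cast_nonneg i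
  have hx1 : (1 : ℝ) ≤ x := by rw [hx]; linarith
  have hx0 : (0 : ℝ) < x := by linarith
  have hinv : 1 / x ≤ 1 := by rw [div_le_one hx0]; exact hx1
  have hbern : (1 + (-(1 / x))) ^ α ≤ 1 + α * (-(1 / x)) := by
    apply rpow_one_add_le_one_add_mul_self _ hα0.le hα1.le
    linarith
  have hfac : (i : ℝ) ^ α = x ^ α * (1 + (-(1 / x))) ^ α := by
    rw [← Real.mul_rpow hx0.le (by linarith)]
    congr 1
    field_simp
    rw [hx]; ring
  have hxa : x ^ α * (1 / x) = α⁻¹ * (α * x ^ (α - 1)) := by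
    rw [Real.rpow_sub hx0, Real.rpow_one]
    field_simp
  have h2 : (i : ℝ) ^ α ≤ x ^ α * (1 + α * (-(1 / x))) := by
    rw [hfac]
    exact mul_le_mul_of_nonneg_left hbern (Real.rpow_nonneg hx0.le α)
  have h3 : x ^ α * (1 + α * (-(1 / x))) = x ^ α - α * (x ^ α * (1 / x)) := by ring
  rw [h3, hxa] at h2
  have h4 : α * (α⁻¹ * (α * x ^ (α - 1))) = α * x ^ (α - 1) := by
    field_simp
  nlinarith [Real.rpow_nonneg hx0.le (α - 1)]

private lemma sum_rpow_bound {α : ℝ} (hα0 : 0 < α) (hα1 : α < 1) (N : ℕ) :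
    ∑ m ∈ Finset.range N, (m : ℝ) ^ (α - 1) ≤ (N : ℝ) ^ α / α := by
  rcases N with _ | n
  · simp [Real.zero_rpow (ne_of_gt hα0)]
  rw [Finset.sum_range_succ']
  have h0 : ((0 : ℕ) : ℝ) ^ (α - 1) = 0 := by
    rw [Nat.cast_zero, Real.zero_rpow (by linarith)]
  rw [h0, add_zero]
  have hstep : ∀ i ∈ Finset.range n, ((i + 1 : ℕ) : ℝ) ^ (α - 1) ≤
      α⁻¹ * ((((i + 1 : ℕ)) : ℝ) ^ α - ((i : ℕ) : ℝ) ^ α) := by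
    intro i _
    have := bernoulli_step hα0 hα1 i
    rw [le_inv_mul_iff₀ hα0]
    push_cast
    linarith
  calc ∑ i ∈ Finset.range n, ((i + 1 : ℕ) : ℝ) ^ (α - 1)
      ≤ ∑ i ∈ Finset.range n, α⁻¹ * ((((i + 1 : ℕ)) : ℝ) ^ α - ((i : ℕ) : ℝ) ^ α) :=
        Finset.sum_le_sum hstep
    _ = α⁻¹ * (((n : ℕ) : ℝ) ^ α - ((0 : ℕ) : ℝ) ^ α) := by
        rw [← Finset.mul_sum, Finset.sum_range_sub (fun i => ((i : ℕ) : ℝ) ^ α)]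
    _ ≤ ((n + 1 : ℕ) : ℝ) ^ α / α := by
        rw [Nat.cast_zero, Real.zero_rpow (by linarith), sub_zero, div_eq_inv_mul]
        have : ((n : ℕ) : ℝ) ^ α ≤ ((n + 1 : ℕ) : ℝ) ^ α := by
          apply Real.rpow_le_rpow (by positivity) _ hα0.le
          push_cast; linarith
        exact mul_le_mul_of_nonneg_left this (by positivity)

/-- Under the uniform exponential sum bound `|S(x,t)| ≤ C x^α`, the partial
sums satisfy `|F_N(t+h) − F_N(t)| ≤ C' h N^α` for all `t ∈ ℝ`, `h > 0`, and `N ≥ 1`. -/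
theorem stmt_3 (f : ℕ → ℂ) (C α : ℝ) (hC : 0 < C) (hα0 : 0 < α) (hα1 : α < 1)
    (hS : ∀ x : ℝ, 1 ≤ x → ∀ t : ℝ,
      ‖∑ n ∈ Finset.Icc 1 ⌊x⌋₊,
        f n * Complex.exp (2 * Real.pi * Complex.I * (n : ℂ) * (t : ℂ))‖ ≤ C * x ^ α) :
    ∃ C' : ℝ, 0 < C' ∧
      ∀ t h : ℝ, 0 < h → ∀ N : ℕ, 1 ≤ N →
        ‖(∑ n ∈ Finset.Icc 1 N,
              f n * Complex.exp (2 * Real.pi * Complex.I * (n : ℂ) * ((t + h : ℝ) : ℂ)) / (n : ℂ)) -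
           (∑ n ∈ Finset.Icc 1 N,
              f n * Complex.exp (2 * Real.pi * Complex.I * (n : ℂ) * (t : ℂ)) / (n : ℂ))‖
          ≤ C' * h * (N : ℝ) ^ α := by
  set π := Real.pi
  set K : ℝ := 8 * π * C with hK
  have hπ : 0 < π := Real.pi_pos
  have hKpos : 0 < K := by positivity
  refine ⟨K * (1 + 1 / α), by positivity, ?_⟩
  intro t h hh N hN
  set E : ℕ → ℝ → ℂ := fun n s => Complex.exp (2 * (π : ℂ) * Complex.I * (n : ℂ) * (s : ℂ))
    with hE
  -- uniform bound on partial sums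
  have hT : ∀ s : ℝ, ∀ m : ℕ,
      ‖∑ n ∈ Finset.Icc 1 m, f n * E n s‖ ≤ C * (m : ℝ) ^ α := by
    intro s m
    rcases Nat.eq_zero_or_pos m with rfl | hm
    · simp [Real.zero_rpow (ne_of_gt hα0)]
    · have h1 : (1 : ℝ) ≤ (m : ℝ) := by exact_mod_cast hm
      have := hS (m : ℝ) h1 s
      rwa [Nat.floor_natCast] at this
  -- Step 1 : bound on A n
  have hA : ∀ n : ℕ,
      ‖∑ m ∈ Finset.Icc 1 n, f m * (E m (t + h) - E m t)‖ ≤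
        K * h * ((n : ℝ) * (n : ℝ) ^ α) := by
    intro n
    set w : ℕ → ℂ := fun m => Complex.exp (((2 * π * m * h : ℝ) : ℂ) * Complex.I) - 1 with hw
    have hsplit : ∀ m : ℕ, f m * (E m (t + h) - E m t) = w m * (f m * E m t) := by
      intro m
      have : E m (t + h) = E m t * Complex.exp (((2 * π * m * h : ℝ) : ℂ) * Complex.I) := by
        rw [hE]
        simp only
        rw [← Complex.exp_add]
        congr 1
        push_cast
        ring
      rw [this, hw]
      ring
    rw [show (∑ m ∈ Finset.Icc 1 n, f m * (E m (t + h) - E m t)) =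
        ∑ m ∈ Finset.Icc 1 n, w m * (f m * E m t) from
      Finset.sum_congr rfl fun m _ => hsplit m]
    refine (abel_bound _ _ _).trans ?_
    have hwn : ‖w n‖ ≤ 4 * π * n * h := by
      have := expI_sub_one (2 * π * n * h)
      rw [abs_of_nonneg (by positivity)] at this
      calc ‖w n‖ ≤ 2 * (2 * π * n * h) := this
        _ = 4 * π * n * h := by ring
    have hwdiff : ∀ m : ℕ, ‖w (m + 1) - w m‖ ≤ 4 * π * h := by
      intro m
      have e1 : Complex.exp (((2 * π * ((m : ℕ) + 1 : ℕ) * h : ℝ) : ℂ) * Complex.I) =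
          Complex.exp (((2 * π * m * h : ℝ) : ℂ) * Complex.I) *
            Complex.exp (((2 * π * h : ℝ) : ℂ) * Complex.I) := by
        rw [← Complex.exp_add]
        congr 1
        push_cast
        ring
      have hfac : w (m + 1) - w m =
          Complex.exp (((2 * π * m * h : ℝ) : ℂ) * Complex.I) *
            (Complex.exp (((2 * π * h : ℝ) : ℂ) * Complex.I) - 1) := by
        rw [hw]
        simp only
        rw [e1]
        ring
      rw [hfac, norm_mul, expI_abs, one_mul]
      have := expI_sub_one (2 * π * h)
      rw [abs_of_nonneg (by positivity)] at this
      linarith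
    have hsum : ∑ m ∈ Finset.range n,
        ‖w (m + 1) - w m‖ * ‖∑ j ∈ Finset.Icc 1 m, f j * E j t‖ ≤
        ∑ m ∈ Finset.range n, (4 * π * h) * (C * (n : ℝ) ^ α) := by
      refine Finset.sum_le_sum fun m hm => ?_
      have hmn : (m : ℝ) ≤ (n : ℝ) := by exact_mod_cast (Finset.mem_range.mp hm).le
      calc ‖w (m + 1) - w m‖ * ‖∑ j ∈ Finset.Icc 1 m, f j * E j t‖
          ≤ (4 * π * h) * (C * (m : ℝ) ^ α) :=
            mul_le_mul (hwdiff m) (hT t m) (norm_nonneg _) (by positivity)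
        _ ≤ (4 * π * h) * (C * (n : ℝ) ^ α) := by
            have h7 : (m : ℝ) ^ α ≤ (n : ℝ) ^ α :=
              Real.rpow_le_rpow (Nat.cast_nonneg m) hmn hα0.le
            exact mul_le_mul_of_nonneg_left
              (mul_le_mul_of_nonneg_left h7 hC.le) (by positivity)
    have hfst : ‖w n‖ * ‖∑ m ∈ Finset.Icc 1 n, f m * E m t‖ ≤
        (4 * π * n * h) * (C * (n : ℝ) ^ α) :=
      mul_le_mul hwn (hT t n) (norm_nonneg _) (by positivity)
    calc ‖w n‖ * ‖∑ m ∈ Finset.Icc 1 n, f m * E m t‖ +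
          ∑ m ∈ Finset.range n,
            ‖w (m + 1) - w m‖ * ‖∑ j ∈ Finset.Icc 1 m, f j * E j t‖
        ≤ (4 * π * n * h) * (C * (n : ℝ) ^ α) +
            ∑ m ∈ Finset.range n, (4 * π * h) * (C * (n : ℝ) ^ α) := add_le_add hfst hsum
      _ = K * h * ((n : ℝ) * (n : ℝ) ^ α) := by
          rw [Finset.sum_const, Finset.card_range, nsmul_eq_mul, hK]
          ring
  -- Step 2
  set w2 : ℕ → ℂ := fun m => ((m : ℂ))⁻¹ with hw2
  set b2 : ℕ → ℂ := fun m => f m * (E m (t + h) - E m t) with hb2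
  have hgoal : (∑ n ∈ Finset.Icc 1 N,
          f n * Complex.exp (2 * (π : ℂ) * Complex.I * (n : ℂ) * ((t + h : ℝ) : ℂ)) / (n : ℂ)) -
        (∑ n ∈ Finset.Icc 1 N,
          f n * Complex.exp (2 * (π : ℂ) * Complex.I * (n : ℂ) * (t : ℂ)) / (n : ℂ)) =
      ∑ m ∈ Finset.Icc 1 N, w2 m * b2 m := by
    rw [← Finset.sum_sub_distrib]
    refine Finset.sum_congr rfl fun m _ => ?_
    rw [hw2, hb2, hE]
    simp only
    field_simp
  rw [hgoal]
  refine (abel_bound _ _ _).trans ?_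
  have hNpos : (0 : ℝ) < (N : ℝ) := by exact_mod_cast hN
  have hterm1 : ‖w2 N‖ * ‖∑ m ∈ Finset.Icc 1 N, b2 m‖ ≤
      K * h * (N : ℝ) ^ α := by
    have h1 : ‖w2 N‖ = ((N : ℝ))⁻¹ := by
      rw [hw2]
      simp [norm_inv, Complex.norm_natCast]
    rw [h1]
    calc ((N : ℝ))⁻¹ * ‖∑ m ∈ Finset.Icc 1 N, b2 m‖
        ≤ ((N : ℝ))⁻¹ * (K * h * ((N : ℝ) * (N : ℝ) ^ α)) := by
          gcongr
          exact hA N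
      _ = K * h * (N : ℝ) ^ α := by field_simp
  have hterm2 : ∑ m ∈ Finset.range N,
      ‖w2 (m + 1) - w2 m‖ * ‖∑ j ∈ Finset.Icc 1 m, b2 j‖ ≤
      K * h * ((N : ℝ) ^ α / α) := by
    have hpt : ∀ m ∈ Finset.range N,
        ‖w2 (m + 1) - w2 m‖ * ‖∑ j ∈ Finset.Icc 1 m, b2 j‖ ≤
          K * h * (m : ℝ) ^ (α - 1) := by
      intro m _
      rcases Nat.eq_zero_or_pos m with rfl | hm
      · simp [Real.zero_rpow (show α - 1 ≠ 0 by intro hc; linarith)]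
      · have hm0 : (0 : ℝ) < (m : ℝ) := by exact_mod_cast hm
        have hm1 : (m : ℂ) ≠ 0 := Nat.cast_ne_zero.mpr hm.ne'
        have hm2 : ((m : ℂ) + 1) ≠ 0 := by
          have h5 : (((m + 1 : ℕ)) : ℂ) ≠ 0 := Nat.cast_ne_zero.mpr (Nat.succ_ne_zero m)
          push_cast at h5
          exact h5
        have habs : ‖w2 (m + 1) - w2 m‖ = 1 / ((m : ℝ) * ((m : ℝ) + 1)) := by
          have h1 : w2 (m + 1) - w2 m = -(((m : ℂ) * ((m : ℂ) + 1))⁻¹) := by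
            rw [hw2]
            simp only
            push_cast
            field_simp
            ring
          rw [h1, norm_neg, norm_inv, norm_mul, Complex.norm_natCast]
          have h6 : ‖(m : ℂ) + 1‖ = (m : ℝ) + 1 := by
            rw [show ((m : ℂ) + 1) = (((m + 1 : ℕ)) : ℂ) by push_cast; ring,
              Complex.norm_natCast]
            push_cast; ring
          rw [h6, one_div]
        have hkey : (m : ℝ) ^ (α - 1) * (m : ℝ) = (m : ℝ) ^ α := by
          rw [Real.rpow_sub hm0, Real.rpow_one]
          field_simp
        have hdiv : (m : ℝ) ^ α / ((m : ℝ) + 1) ≤ (m : ℝ) ^ (α - 1) := by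
          rw [div_le_iff₀ (by positivity : (0 : ℝ) < (m : ℝ) + 1)]
          have hnn : 0 ≤ (m : ℝ) ^ (α - 1) := Real.rpow_nonneg hm0.le _
          nlinarith
        rw [habs]
        calc (1 / ((m : ℝ) * ((m : ℝ) + 1))) * ‖∑ j ∈ Finset.Icc 1 m, b2 j‖
            ≤ (1 / ((m : ℝ) * ((m : ℝ) + 1))) * (K * h * ((m : ℝ) * (m : ℝ) ^ α)) := by
              gcongr
              exact hA m
          _ = K * h * ((m : ℝ) ^ α / ((m : ℝ) + 1)) := by field_simp
          _ ≤ K * h * (m : ℝ) ^ (α - 1) :=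
              mul_le_mul_of_nonneg_left hdiv (by positivity)
    calc ∑ m ∈ Finset.range N,
          ‖w2 (m + 1) - w2 m‖ * ‖∑ j ∈ Finset.Icc 1 m, b2 j‖
        ≤ ∑ m ∈ Finset.range N, K * h * (m : ℝ) ^ (α - 1) := Finset.sum_le_sum hpt
      _ = K * h * ∑ m ∈ Finset.range N, (m : ℝ) ^ (α - 1) := by rw [← Finset.mul_sum]
      _ ≤ K * h * ((N : ℝ) ^ α / α) := by
          gcongr
          exact sum_rpow_bound hα0 hα1 N
  calc ‖w2 N‖ * ‖∑ m ∈ Finset.Icc 1 N, b2 m‖ +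
        ∑ m ∈ Finset.range N,
          ‖w2 (m + 1) - w2 m‖ * ‖∑ j ∈ Finset.Icc 1 m, b2 j‖
      ≤ K * h * (N : ℝ) ^ α + K * h * ((N : ℝ) ^ α / α) := add_le_add hterm1 hterm2
    _ = K * (1 + 1 / α) * h * (N : ℝ) ^ α := by field_simp
end

section
/- Let f : ℕ → ℂ be an arithmetic function and suppose there exist constants C > 0 and α ∈ (0,1) such that |S(x,t)| ≤ C·x^α for all real x ≥ 1 and all t ∈ ℝ. Then the Hausdorff dimension of the graph G(F) = {(t, |F(t)|) : t ∈ [0,1]} ⊂ ℝ² is at most 1 + α, and the same bound holds for the Hausdorff dimensions of the graphs {(t, Re F(t)) : t ∈ [0,1]} and {(t, Im F(t)) : t ∈ [0,1]}. -/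
open Filter Finset Topology MeasureTheory ENNReal NNReal Complex

lemma grid_mem (v : ℝ) (n m : ℕ) (hn : 0 < n) (hm : 0 < m) (hv0 : 0 ≤ v)
    (hvm : v ≤ m / n) : ∃ j : ℕ, j < m ∧ (j : ℝ) / n ≤ v ∧ v ≤ (j + 1) / n := by
  set j := min ⌊v * n⌋₊ (m - 1) with hj
  have hnR : (0:ℝ) < n := Nat.cast_pos.mpr hn
  refine ⟨j, ?_, ?_, ?_⟩
  · exact lt_of_le_of_lt (min_le_right _ _) (Nat.sub_lt hm one_pos)
  · have h1 : (j : ℝ) ≤ ⌊v * n⌋₊ := Nat.cast_le.mpr (min_le_left _ _)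
    have h2 : (⌊v * n⌋₊ : ℝ) ≤ v * n := Nat.floor_le (by positivity)
    rw [div_le_iff₀ hnR]; linarith
  · rcases le_or_gt ⌊v * n⌋₊ (m - 1) with h | h
    · have hjf : j = ⌊v * n⌋₊ := min_eq_left h
      have : v * n < ⌊v * n⌋₊ + 1 := Nat.lt_floor_add_one _
      rw [le_div_iff₀ hnR, hjf]; linarith
    · have hjf : j = m - 1 := min_eq_right h.le
      have he : (j : ℝ) + 1 = m := by
        rw [hjf]; push_cast [Nat.cast_sub hm]; ring
      rw [he]; exact hvm

lemma ediam_prod_le {X Y : Type*} [PseudoEMetricSpace X] [PseudoEMetricSpace Y]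
    (A : Set X) (B : Set Y) :
    Metric.ediam (A ×ˢ B) ≤ max (Metric.ediam A) (Metric.ediam B) :=
  EMetric.diam_le fun x hx y hy => by
    rw [Prod.edist_eq]
    exact max_le_max (EMetric.edist_le_diam_of_mem hx.1 hy.1)
      (EMetric.edist_le_diam_of_mem hx.2 hy.2)

lemma dimH_graph_le (g : ℝ → ℝ) (K β : ℝ) (hK : 0 ≤ K) (hβ0 : 0 < β) (hβ1 : β ≤ 1)
    (hg : ∀ s ∈ Set.Icc (0:ℝ) 1, ∀ t ∈ Set.Icc (0:ℝ) 1, |g t - g s| ≤ K * |t - s| ^ β) :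
    dimH {p : ℝ × ℝ | p.1 ∈ Set.Icc (0:ℝ) 1 ∧ p.2 = g p.1} ≤ ENNReal.ofReal (2 - β) := by
  set S := {p : ℝ × ℝ | p.1 ∈ Set.Icc (0:ℝ) 1 ∧ p.2 = g p.1} with hS
  set M : ℕ → ℕ := fun N => ⌈2 * K * (N : ℝ) ^ (1 - β)⌉₊ + 1 with hM
  set t : ∀ N : ℕ, Fin N × Fin (M N) → Set (ℝ × ℝ) := fun N ij =>
    Set.Icc ((ij.1 : ℝ) / N) ((ij.1 + 1) / N) ×ˢ
      Set.Icc (g (ij.1 / N) - K * (N : ℝ) ^ (-β) + ij.2 / N)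
        (g (ij.1 / N) - K * (N : ℝ) ^ (-β) + (ij.2 + 1) / N) with ht
  -- diameter bound
  have hdiam : ∀ N : ℕ, ∀ ij : Fin N × Fin (M N),
      Metric.ediam (t N ij) ≤ ENNReal.ofReal (1 / N) := by
    intro N ij
    refine le_trans (ediam_prod_le _ _) (max_le ?_ ?_)
    · rw [Real.ediam_Icc]
      apply ENNReal.ofReal_le_ofReal
      rw [div_sub_div_same]; norm_num
    · rw [Real.ediam_Icc]
      apply ENNReal.ofReal_le_ofReal
      rw [add_sub_add_left_eq_sub, div_sub_div_same]; norm_num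
  -- covering property
  have hcov : ∀ N : ℕ, 1 ≤ N → S ⊆ ⋃ ij, t N ij := by
    intro N hN p hp
    have hN0 : (0:ℝ) < N := by exact_mod_cast hN
    obtain ⟨hp1, hp2⟩ := hp
    obtain ⟨i, hi, hi1, hi2⟩ := grid_mem p.1 N N hN hN hp1.1
      (by rw [div_self hN0.ne']; exact hp1.2)
    have hiN : (i : ℝ) / N ∈ Set.Icc (0:ℝ) 1 := by
      constructor
      · positivity
      · rw [div_le_one hN0]; exact_mod_cast hi.le
    have hsum : ((i : ℝ) + 1) / N = i / N + 1 / N := by ring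
    have hdist : |p.1 - (i : ℝ) / N| ≤ 1 / N := by
      rw [abs_le]; constructor <;> linarith [hsum ▸ hi2]
    have hpow : |p.1 - (i : ℝ) / N| ^ β ≤ (N : ℝ) ^ (-β) := by
      calc |p.1 - (i : ℝ) / N| ^ β ≤ (1 / N) ^ β :=
            Real.rpow_le_rpow (abs_nonneg _) hdist hβ0.le
        _ = (N : ℝ) ^ (-β) := by
            rw [one_div, Real.inv_rpow hN0.le, ← Real.rpow_neg hN0.le]
    have hgb : |g p.1 - g ((i : ℝ) / N)| ≤ K * (N : ℝ) ^ (-β) :=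
      le_trans (hg _ hiN _ hp1) (mul_le_mul_of_nonneg_left hpow hK)
    have habs := abs_le.mp hgb
    have hMlb : 2 * K * (N : ℝ) ^ (-β) ≤ (M N : ℝ) / N := by
      have h1 : 2 * K * (N : ℝ) ^ (1 - β) ≤ M N := by
        have := Nat.le_ceil (2 * K * (N : ℝ) ^ (1 - β))
        push_cast [hM]
        linarith
      have hsplit : (N : ℝ) ^ (1 - β) = (N : ℝ) ^ (-β) * N := by
        rw [show (1 - β) = -β + 1 by ring, Real.rpow_add hN0, Real.rpow_one]
      rw [le_div_iff₀ hN0]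
      calc 2 * K * (N : ℝ) ^ (-β) * N = 2 * K * (N : ℝ) ^ (1 - β) := by
            rw [hsplit]; ring
        _ ≤ M N := h1
    obtain ⟨j, hj, hj1, hj2⟩ := grid_mem (g p.1 - (g ((i:ℝ)/N) - K * (N:ℝ) ^ (-β))) N (M N)
      hN (Nat.succ_pos _) (by linarith [habs.2]) (by linarith [habs.1])
    refine Set.mem_iUnion.mpr ⟨(⟨i, hi⟩, ⟨j, hj⟩), Set.mem_prod.mpr ⟨⟨hi1, hi2⟩, ?_, ?_⟩⟩
    · simp only [hp2]; linarith
    · simp only [hp2]; linarith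
  -- measure bound
  have hr : Tendsto (fun N : ℕ => ENNReal.ofReal (1 / (N:ℝ))) atTop (𝓝 0) := by
    rw [← ENNReal.ofReal_zero]
    exact ENNReal.tendsto_ofReal tendsto_one_div_atTop_nhds_zero_nat
  have hsum : ∀ N : ℕ, 1 ≤ N →
      (∑ ij : Fin N × Fin (M N), Metric.ediam (t N ij) ^ (2 - β : ℝ))
        ≤ ENNReal.ofReal (2 * K + 2) := by
    intro N hN
    have hN0 : (0:ℝ) < N := by exact_mod_cast hN
    have h2β : (0:ℝ) ≤ 2 - β := by linarith
    calc (∑ ij : Fin N × Fin (M N), Metric.ediam (t N ij) ^ (2 - β : ℝ))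
        ≤ ∑ _ij : Fin N × Fin (M N), ENNReal.ofReal (1 / N) ^ (2 - β : ℝ) :=
          Finset.sum_le_sum fun ij _ => ENNReal.rpow_le_rpow (hdiam N ij) h2β
      _ = (N * M N : ℕ) * ENNReal.ofReal (1 / N) ^ (2 - β : ℝ) := by
          rw [Finset.sum_const, Finset.card_univ, Fintype.card_prod, Fintype.card_fin,
            Fintype.card_fin, nsmul_eq_mul]
      _ = ENNReal.ofReal ((N * M N : ℕ) * (1 / N) ^ (2 - β : ℝ)) := by
          rw [ENNReal.ofReal_rpow_of_pos (by positivity),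
            ← ENNReal.ofReal_natCast (N * M N), ← ENNReal.ofReal_mul (by positivity)]
      _ ≤ ENNReal.ofReal (2 * K + 2) := by
          apply ENNReal.ofReal_le_ofReal
          rw [Nat.cast_mul]
          have hMub : (M N : ℝ) ≤ 2 * K * (N : ℝ) ^ (1 - β) + 2 := by
            have := Nat.ceil_lt_add_one (show (0:ℝ) ≤ 2 * K * (N : ℝ) ^ (1 - β) by positivity)
            push_cast [hM]
            linarith
          have h2 : (0:ℝ) ≤ (N : ℝ) ^ (β - 1) := Real.rpow_nonneg hN0.le _
          have h1 : (N : ℝ) ^ (β - 1) ≤ 1 :=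
            Real.rpow_le_one_of_one_le_of_nonpos (by exact_mod_cast hN) (by linarith)
          have h3 : (N : ℝ) ^ (1 - β) * (N : ℝ) ^ (β - 1) = 1 := by
            rw [← Real.rpow_add hN0]; norm_num
          have h4 : (N : ℝ) ^ (β - 1) = N * (N : ℝ) ^ (β - 2) := by
            rw [show β - 1 = 1 + (β - 2) by ring, Real.rpow_add hN0, Real.rpow_one]
          have hpow : (1 / (N:ℝ)) ^ (2 - β : ℝ) = (N : ℝ) ^ (β - 2) := by
            rw [one_div, Real.inv_rpow hN0.le, ← Real.rpow_neg hN0.le]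
            norm_num
          calc (N : ℝ) * (M N) * (1 / N) ^ (2 - β : ℝ)
              = (M N : ℝ) * ((N : ℝ) * (N : ℝ) ^ (β - 2)) := by rw [hpow]; ring
            _ = (M N : ℝ) * (N : ℝ) ^ (β - 1) := by rw [← h4]
            _ ≤ (2 * K * (N : ℝ) ^ (1 - β) + 2) * (N : ℝ) ^ (β - 1) :=
                mul_le_mul_of_nonneg_right hMub h2
            _ = 2 * K * ((N : ℝ) ^ (1 - β) * (N : ℝ) ^ (β - 1)) + 2 * (N : ℝ) ^ (β - 1) := by
                ring
            _ = 2 * K + 2 * (N : ℝ) ^ (β - 1) := by rw [h3]; ring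
            _ ≤ 2 * K + 2 := by linarith
  have hmeas : μH[(2 - β : ℝ)] S ≤ ENNReal.ofReal (2 * K + 2) := by
    refine le_trans (Measure.hausdorffMeasure_le_liminf_sum (2 - β) S
      (fun N : ℕ => ENNReal.ofReal (1 / (N:ℝ))) hr t
      (Eventually.of_forall fun N => hdiam N) (eventually_atTop.mpr ⟨1, hcov⟩)) ?_
    exact liminf_le_of_frequently_le' ((eventually_atTop.mpr ⟨1, hsum⟩).frequently)
  have h2β : (0:ℝ) ≤ 2 - β := by linarith
  have hrw : ENNReal.ofReal (2 - β) = (((2 - β).toNNReal : ℝ≥0) : ℝ≥0∞) := rfl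
  rw [hrw]
  apply dimH_le_of_hausdorffMeasure_ne_top
  rw [Real.coe_toNNReal _ h2β]
  exact ne_top_of_le_ne_top ENNReal.ofReal_ne_top hmeas

-- Abel summation identity over Ioc 0 N
lemma abel_sum_s4 (a c : ℕ → ℂ) : ∀ N : ℕ, ∑ n ∈ Ioc 0 N, a n * c n
    = (∑ n ∈ Ioc 0 N, (∑ k ∈ Ioc 0 n, a k) * (c n - c (n + 1)))
      + (∑ k ∈ Ioc 0 N, a k) * c (N + 1) := by
  intro N
  induction N with
  | zero => simp
  | succ N ih =>
      rw [Finset.sum_Ioc_succ_top (Nat.zero_le _), Finset.sum_Ioc_succ_top (Nat.zero_le _),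
        Finset.sum_Ioc_succ_top (Nat.zero_le _), ih]
      ring

-- |exp(ix) - 1| ≤ |x|
lemma abs_exp_I_sub_one_le (x : ℝ) :
    ‖Complex.exp (x * Complex.I) - 1‖ ≤ |x| := by
  have he : Complex.exp (x * Complex.I) - 1
      = Complex.ofReal (Real.cos x - 1) + Complex.ofReal (Real.sin x) * Complex.I := by
    rw [Complex.exp_mul_I]
    push_cast
    ring
  rw [he, Complex.norm_add_mul_I]
  have h1 : (Real.cos x - 1) ^ 2 + Real.sin x ^ 2 ≤ x ^ 2 := by
    have h2 := Real.sin_sq_add_cos_sq x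
    have h3 := Real.one_sub_sq_div_two_le_cos (x := x)
    nlinarith
  calc Real.sqrt ((Real.cos x - 1) ^ 2 + Real.sin x ^ 2) ≤ Real.sqrt (x ^ 2) :=
        Real.sqrt_le_sqrt h1
    _ = |x| := Real.sqrt_sq_eq_abs x

lemma abs_exp_I_sub_one_le_two (x : ℝ) :
    ‖Complex.exp (x * Complex.I) - 1‖ ≤ 2 := by
  calc ‖Complex.exp (x * Complex.I) - 1‖
      ≤ ‖Complex.exp (x * Complex.I)‖ + ‖(1:ℂ)‖ :=
        (norm_sub_le _ _)
    _ ≤ 2 := by rw [Complex.norm_exp_ofReal_mul_I]; norm_num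

-- MVT for rpow
lemma mvt_rpow (p x : ℝ) (hx : 1 ≤ x) :
    ∃ c : ℝ, x < c ∧ c < x + 1 ∧ (x + 1) ^ p - x ^ p = p * c ^ (p - 1) := by
  have hlt : x < x + 1 := by linarith
  have hder : ∀ y ∈ Set.Ioo x (x + 1), HasDerivAt (fun z : ℝ => z ^ p) (p * y ^ (p - 1)) y :=
    fun y hy => Real.hasDerivAt_rpow_const (Or.inl (by nlinarith [hy.1] : (0:ℝ) < y).ne')
  have hcont : ContinuousOn (fun z : ℝ => z ^ p) (Set.Icc x (x + 1)) := by
    intro y hy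
    exact (Real.hasDerivAt_rpow_const
      (Or.inl (by nlinarith [hy.1] : (0:ℝ) < y).ne')).continuousAt.continuousWithinAt
  obtain ⟨c, hc, hceq⟩ := exists_hasDerivAt_eq_slope (fun z : ℝ => z ^ p)
    (fun y => p * y ^ (p - 1)) hlt hcont hder
  refine ⟨c, hc.1, hc.2, ?_⟩
  rw [hceq]
  simp

lemma sum_rpow_head (α : ℝ) (hα0 : 0 < α) (hα1 : α < 1) (M : ℕ) :
    ∑ n ∈ Ioc 0 M, (n:ℝ) ^ (α - 1) ≤ 1 + (M:ℝ) ^ α / α := by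
  induction M with
  | zero => simp [Real.zero_rpow hα0.ne']
  | succ M ih =>
      rw [Finset.sum_Ioc_succ_top (Nat.zero_le _)]
      rcases Nat.eq_zero_or_pos M with h0 | hM
      · subst h0
        have h1 : (0:ℝ) ≤ 1 / α := by positivity
        simp only [Nat.cast_zero, Nat.cast_one, Real.one_rpow, Finset.Ioc_self,
          Finset.sum_empty, zero_add]
        norm_num [Real.one_rpow]
        linarith
      · have hM1 : (1:ℝ) ≤ M := by exact_mod_cast hM
        obtain ⟨c, hc1, hc2, hceq⟩ := mvt_rpow α M hM1
        have hcpos : (0:ℝ) < c := by linarith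
        have hdec : ((M:ℝ) + 1) ^ (α - 1) ≤ c ^ (α - 1) :=
          Real.rpow_le_rpow_of_nonpos hcpos hc2.le (by linarith)
        have key : α * (((M:ℝ) + 1) ^ (α - 1)) ≤ ((M:ℝ) + 1) ^ α - (M:ℝ) ^ α := by
          rw [hceq]
          exact mul_le_mul_of_nonneg_left hdec hα0.le
        have ht : (((M:ℝ) + 1) ^ (α - 1)) ≤ (((M:ℝ) + 1) ^ α - (M:ℝ) ^ α) / α :=
          (le_div_iff₀ hα0).mpr (by linarith [key])
        have hexp : (((M:ℝ) + 1) ^ α - (M:ℝ) ^ α) / α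
            = ((M:ℝ) + 1) ^ α / α - (M:ℝ) ^ α / α := sub_div _ _ _
        push_cast
        linarith [ih, hexp ▸ ht]

lemma sum_rpow_tail (α : ℝ) (hα0 : 0 < α) (hα1 : α < 1) (M : ℕ) (hM : 1 ≤ M) (N : ℕ) :
    ∑ n ∈ Ioc M N, (n:ℝ) ^ (α - 2) ≤ (M:ℝ) ^ (α - 1) / (1 - α) := by
  have h1α : (0:ℝ) < 1 - α := by linarith
  suffices h : ∑ n ∈ Ioc M N, (n:ℝ) ^ (α - 2)
      ≤ ((M:ℝ) ^ (α - 1) - ((max M N : ℕ):ℝ) ^ (α - 1)) / (1 - α) by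
    refine le_trans h ((div_le_div_iff_of_pos_right h1α).mpr ?_)
    have := Real.rpow_nonneg (Nat.cast_nonneg (max M N) : (0:ℝ) ≤ (max M N : ℕ)) (α - 1)
    linarith
  induction N with
  | zero =>
      rw [Nat.max_eq_left (Nat.zero_le M)]
      simp
  | succ N ih =>
      rcases le_or_gt (N + 1) M with h | h
      · rw [Finset.Ioc_eq_empty (by omega), Nat.max_eq_left (by omega)]
        simp
      · have hMN : M ≤ N := by omega
        have hmax1 : max M N = N := Nat.max_eq_right hMN
        have hmax2 : max M (N + 1) = N + 1 := Nat.max_eq_right (by omega)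
        have hN1 : (1:ℝ) ≤ N := by exact_mod_cast hM.trans hMN
        obtain ⟨c, hc1, hc2, hceq⟩ := mvt_rpow (α - 1) N hN1
        have hcpos : (0:ℝ) < c := by linarith
        have hdec : ((N:ℝ) + 1) ^ (α - 2) ≤ c ^ (α - 2) := by
          have := Real.rpow_le_rpow_of_nonpos hcpos hc2.le (show α - 2 ≤ 0 by linarith)
          simpa [show α - 1 - 1 = α - 2 by ring] using this
        have hceq' : (N:ℝ) ^ (α - 1) - ((N:ℝ) + 1) ^ (α - 1) = (1 - α) * c ^ (α - 1 - 1) := by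
          have : ((N:ℝ) + 1) ^ (α - 1) - (N:ℝ) ^ (α - 1) = (α - 1) * c ^ (α - 1 - 1) := hceq
          linarith [this]
        have key : (1 - α) * (((N:ℝ) + 1) ^ (α - 2))
            ≤ (N:ℝ) ^ (α - 1) - ((N:ℝ) + 1) ^ (α - 1) := by
          rw [hceq', show α - 1 - 1 = α - 2 by ring]
          exact mul_le_mul_of_nonneg_left hdec h1α.le
        have ht : ((N:ℝ) + 1) ^ (α - 2)
            ≤ ((N:ℝ) ^ (α - 1) - ((N:ℝ) + 1) ^ (α - 1)) / (1 - α) :=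
          (le_div_iff₀ h1α).mpr (by linarith [key])
        rw [Finset.sum_Ioc_succ_top hMN, hmax2]
        rw [hmax1] at ih
        have e1 : ((M:ℝ) ^ (α - 1) - ((N:ℝ)) ^ (α - 1)) / (1 - α)
            = (M:ℝ) ^ (α - 1) / (1 - α) - (N:ℝ) ^ (α - 1) / (1 - α) := sub_div _ _ _
        have e2 : ((M:ℝ) ^ (α - 1) - (((N:ℝ)) + 1) ^ (α - 1)) / (1 - α)
            = (M:ℝ) ^ (α - 1) / (1 - α) - ((N:ℝ) + 1) ^ (α - 1) / (1 - α) := sub_div _ _ _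
        have e3 : (((N:ℝ)) ^ (α - 1) - (((N:ℝ)) + 1) ^ (α - 1)) / (1 - α)
            = (N:ℝ) ^ (α - 1) / (1 - α) - ((N:ℝ) + 1) ^ (α - 1) / (1 - α) := sub_div _ _ _
        push_cast
        push_cast at ih
        linarith [ih, e1 ▸ ih, ht]

noncomputable def Efun (u : ℝ) (n : ℕ) : ℂ :=
  Complex.exp (2 * Real.pi * Complex.I * (n : ℂ) * (u : ℂ))

noncomputable def Sfun (f : ℕ → ℂ) (N : ℕ) (u : ℝ) : ℂ :=
  ∑ n ∈ Finset.Ioc 0 N, f n * Efun u n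

noncomputable def Pfun (f : ℕ → ℂ) (N : ℕ) (u : ℝ) : ℂ :=
  ∑ n ∈ Finset.Ioc 0 N, f n * Efun u n / n

lemma Pfun_abel (f : ℕ → ℂ) (N : ℕ) (u : ℝ) :
    Pfun f N u = (∑ n ∈ Ioc 0 N, Sfun f n u * (((n:ℕ):ℂ)⁻¹ - ((n+1:ℕ):ℂ)⁻¹))
      + Sfun f N u * ((N+1:ℕ):ℂ)⁻¹ := by
  have := abel_sum_s4 (fun n => f n * Efun u n) (fun n => ((n:ℕ):ℂ)⁻¹) N
  simpa [Pfun, Sfun, div_eq_mul_inv] using this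

-- coefficient difference bound
lemma coeff_diff_abs (n : ℕ) (hn : 1 ≤ n) :
    ‖((n:ℕ):ℂ)⁻¹ - ((n+1:ℕ):ℂ)⁻¹‖ ≤ (((n:ℝ))^2)⁻¹ := by
  have hn0 : (0:ℝ) < n := by exact_mod_cast hn
  have hc : (((n:ℕ):ℂ))⁻¹ - ((n+1:ℕ):ℂ)⁻¹ = ((((n:ℝ))⁻¹ - (((n:ℝ))+1)⁻¹ : ℝ) : ℂ) := by
    push_cast; ring
  rw [hc, Complex.norm_real, Real.norm_eq_abs]
  have h1 : ((n:ℝ))⁻¹ - (((n:ℝ))+1)⁻¹ = (((n:ℝ))*(((n:ℝ))+1))⁻¹ := by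
    field_simp
    ring
  rw [_root_.abs_of_nonneg (by rw [h1]; positivity), h1]
  apply inv_anti₀ (by positivity)
  nlinarith

lemma rpow_sub_two (α : ℝ) (n : ℕ) (hn : 1 ≤ n) :
    (n:ℝ) ^ (α - 2) = (n:ℝ) ^ α * (((n:ℝ))^2)⁻¹ := by
  have hn0 : (0:ℝ) < n := by exact_mod_cast hn
  have h2 : (n:ℝ) ^ ((2:ℕ):ℝ) = (n:ℝ) ^ (2:ℕ) := Real.rpow_natCast _ 2
  rw [show α - 2 = α - ((2:ℕ):ℝ) by norm_num, Real.rpow_sub hn0, div_eq_mul_inv, h2]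

lemma rpow_sub_one (α : ℝ) (n : ℕ) (hn : 1 ≤ n) :
    (n:ℝ) ^ (α - 1) = (n:ℝ) ^ α * ((n:ℝ))⁻¹ := by
  have hn0 : (0:ℝ) < n := by exact_mod_cast hn
  rw [Real.rpow_sub hn0, Real.rpow_one, div_eq_mul_inv]

lemma tail_est (f : ℕ → ℂ) (C α : ℝ) (hC : 0 < C) (hα0 : 0 < α) (hα1 : α < 1)
    (hSb : ∀ (N : ℕ) (u : ℝ), ‖Sfun f N u‖ ≤ C * (N:ℝ)^α)
    (F : ℝ → ℂ) (hF : ∀ u : ℝ, Tendsto (fun N => Pfun f N u) atTop (𝓝 (F u)))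
    (M : ℕ) (hM : 1 ≤ M) (u : ℝ) :
    ‖F u - Pfun f M u‖ ≤ C * (1 + 1/(1-α)) * (M:ℝ)^(α-1) := by
  have h1α : (0:ℝ) < 1 - α := by linarith
  have hM0 : (0:ℝ) < M := by exact_mod_cast hM
  -- bound for partial sums beyond M
  have hbound : ∀ N : ℕ, M ≤ N → ‖Pfun f N u - Pfun f M u‖
      ≤ C * ((M:ℝ)^(α-1)/(1-α)) + C * (N:ℝ)^(α-1) + C * (M:ℝ)^(α-1) := by
    intro N hMN
    have hN0 : (0:ℝ) < N := lt_of_lt_of_le hM0 (by exact_mod_cast hMN)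
    have hsplit := Finset.sum_Ioc_consecutive
      (fun n => Sfun f n u * (((n:ℕ):ℂ)⁻¹ - ((n+1:ℕ):ℂ)⁻¹)) (Nat.zero_le M) hMN
    have he : Pfun f N u - Pfun f M u
        = (∑ n ∈ Ioc M N, Sfun f n u * (((n:ℕ):ℂ)⁻¹ - ((n+1:ℕ):ℂ)⁻¹))
          + Sfun f N u * ((N+1:ℕ):ℂ)⁻¹ - Sfun f M u * ((M+1:ℕ):ℂ)⁻¹ := by
      rw [Pfun_abel f N u, Pfun_abel f M u, ← hsplit]
      ring
    rw [he]
    have tri : ‖(∑ n ∈ Ioc M N, Sfun f n u * (((n:ℕ):ℂ)⁻¹ - ((n+1:ℕ):ℂ)⁻¹))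
          + Sfun f N u * ((N+1:ℕ):ℂ)⁻¹ - Sfun f M u * ((M+1:ℕ):ℂ)⁻¹‖
        ≤ ‖∑ n ∈ Ioc M N, Sfun f n u * (((n:ℕ):ℂ)⁻¹ - ((n+1:ℕ):ℂ)⁻¹)‖
          + ‖Sfun f N u * ((N+1:ℕ):ℂ)⁻¹‖
          + ‖Sfun f M u * ((M+1:ℕ):ℂ)⁻¹‖ := by
      calc ‖_ + _ - _‖ ≤ ‖_ + _‖ + ‖Sfun f M u * ((M+1:ℕ):ℂ)⁻¹‖ :=
            norm_sub_le _ _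
        _ ≤ _ + _ + _ := by
            gcongr
            exact norm_add_le _ _
    refine le_trans tri (add_le_add (add_le_add ?_ ?_) ?_)
    · -- middle sum
      calc ‖∑ n ∈ Ioc M N, Sfun f n u * (((n:ℕ):ℂ)⁻¹ - ((n+1:ℕ):ℂ)⁻¹)‖
          ≤ ∑ n ∈ Ioc M N, ‖Sfun f n u * (((n:ℕ):ℂ)⁻¹ - ((n+1:ℕ):ℂ)⁻¹)‖ :=
            norm_sum_le _ _
        _ ≤ ∑ n ∈ Ioc M N, C * (n:ℝ)^(α-2) := by
            apply Finset.sum_le_sum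
            intro n hn
            have hn1 : 1 ≤ n := le_trans hM (Finset.mem_Ioc.mp hn).1.le
            rw [norm_mul]
            calc ‖Sfun f n u‖ * ‖((n:ℕ):ℂ)⁻¹ - ((n+1:ℕ):ℂ)⁻¹‖
                ≤ (C * (n:ℝ)^α) * (((n:ℝ))^2)⁻¹ := by
                  apply mul_le_mul (hSb n u) (coeff_diff_abs n hn1) (norm_nonneg _)
                  positivity
              _ = C * (n:ℝ)^(α-2) := by rw [rpow_sub_two α n hn1]; ring
        _ = C * ∑ n ∈ Ioc M N, (n:ℝ)^(α-2) := by rw [Finset.mul_sum]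
        _ ≤ C * ((M:ℝ)^(α-1)/(1-α)) :=
            mul_le_mul_of_nonneg_left (sum_rpow_tail α hα0 hα1 M hM N) hC.le
    · -- boundary N
      rw [norm_mul, norm_inv, Complex.norm_natCast]
      push_cast
      calc ‖Sfun f N u‖ * ((N:ℝ)+1)⁻¹ ≤ (C * (N:ℝ)^α) * ((N:ℝ))⁻¹ := by
            apply mul_le_mul (hSb N u) _ (by positivity) (by positivity)
            exact inv_anti₀ hN0 (by linarith)
        _ = C * (N:ℝ)^(α-1) := by
            rw [rpow_sub_one α N (by exact_mod_cast hN0)]; ring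
    · -- boundary M
      rw [norm_mul, norm_inv, Complex.norm_natCast]
      push_cast
      calc ‖Sfun f M u‖ * ((M:ℝ)+1)⁻¹ ≤ (C * (M:ℝ)^α) * ((M:ℝ))⁻¹ := by
            apply mul_le_mul (hSb M u) _ (by positivity) (by positivity)
            exact inv_anti₀ hM0 (by linarith)
        _ = C * (M:ℝ)^(α-1) := by rw [rpow_sub_one α M hM]; ring
  -- take the limit N → ∞
  have hlim1 : Tendsto (fun N : ℕ => ‖Pfun f N u - Pfun f M u‖) atTop
      (𝓝 (‖F u - Pfun f M u‖)) := by
    have := ((hF u).sub (tendsto_const_nhds : Tendsto (fun _ : ℕ => Pfun f M u) atTop _)).norm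
    simpa using this
  have hlim2 : Tendsto (fun N : ℕ => C * ((M:ℝ)^(α-1)/(1-α)) + C * (N:ℝ)^(α-1) + C * (M:ℝ)^(α-1))
      atTop (𝓝 (C * ((M:ℝ)^(α-1)/(1-α)) + C * 0 + C * (M:ℝ)^(α-1))) := by
    refine Tendsto.add (Tendsto.add tendsto_const_nhds (Tendsto.const_mul _ ?_)) tendsto_const_nhds
    have h1 : Tendsto (fun x : ℝ => x ^ (-(1-α))) atTop (𝓝 0) := tendsto_rpow_neg_atTop h1α
    have h2 : Tendsto (fun N : ℕ => (N:ℝ)) atTop atTop := tendsto_natCast_atTop_atTop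
    have := h1.comp h2
    simpa [Function.comp_def, show -(1-α) = α - 1 by ring] using this
  have := le_of_tendsto_of_tendsto hlim1 hlim2 (eventually_atTop.mpr ⟨M, hbound⟩)
  calc ‖F u - Pfun f M u‖ ≤ C * ((M:ℝ)^(α-1)/(1-α)) + C * 0 + C * (M:ℝ)^(α-1) := this
    _ = C * (1 + 1/(1-α)) * (M:ℝ)^(α-1) := by field_simp; ring

lemma head_est (f : ℕ → ℂ) (C α : ℝ) (hC : 0 < C) (hα0 : 0 < α) (hα1 : α < 1)
    (hSb : ∀ (N : ℕ) (u : ℝ), ‖Sfun f N u‖ ≤ C * (N:ℝ)^α)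
    (M : ℕ) (hM : 1 ≤ M) (t s : ℝ) :
    ‖Pfun f M t - Pfun f M s‖
      ≤ 4*Real.pi*C* |t-s| *(1 + (M:ℝ)^α/α) + 2*C*(M:ℝ)^(α-1) := by
  have hπ := Real.pi_pos
  set δ := t - s with hδ
  have hh0 : (0:ℝ) ≤ |δ| := abs_nonneg δ
  set e : ℕ → ℂ := fun n => Complex.exp (((2*Real.pi*(n:ℝ)*δ : ℝ) : ℂ) * Complex.I) with he
  set c : ℕ → ℂ := fun n => (e n - 1) * ((n:ℕ):ℂ)⁻¹ with hc
  set a : ℕ → ℂ := fun n => f n * Efun s n with ha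
  have habs_e : ∀ n : ℕ, ‖e n‖ = 1 := fun n => Complex.norm_exp_ofReal_mul_I _
  have habs_e1 : ∀ n : ℕ, ‖e n - 1‖ ≤ 2*Real.pi*(n:ℝ)* |δ| := by
    intro n
    refine le_trans (abs_exp_I_sub_one_le _) ?_
    rw [abs_mul, abs_mul, abs_mul]
    rw [_root_.abs_of_nonneg (by norm_num : (0:ℝ) ≤ 2), _root_.abs_of_nonneg hπ.le,
      _root_.abs_of_nonneg (Nat.cast_nonneg n)]
  have he_succ : ∀ n : ℕ, e (n+1) = e n * Complex.exp (((2*Real.pi*δ : ℝ) : ℂ) * Complex.I) := by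
    intro n
    rw [he]
    simp only []
    rw [← Complex.exp_add]
    congr 1
    push_cast
    ring
  have habs_ediff : ∀ n : ℕ, ‖e n - e (n+1)‖ ≤ 2*Real.pi* |δ| := by
    intro n
    have : e n - e (n+1) = -(e n * (Complex.exp (((2*Real.pi*δ : ℝ) : ℂ) * Complex.I) - 1)) := by
      rw [he_succ n]; ring
    rw [this, norm_neg, norm_mul, habs_e n, one_mul]
    refine le_trans (abs_exp_I_sub_one_le _) ?_
    rw [abs_mul, abs_mul, _root_.abs_of_nonneg (by norm_num : (0:ℝ) ≤ 2),
      _root_.abs_of_nonneg hπ.le]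
  have hc_diff : ∀ n : ℕ, 1 ≤ n →
      ‖c n - c (n+1)‖ ≤ 4*Real.pi* |δ| *((n:ℝ))⁻¹ := by
    intro n hn
    have hn0 : (0:ℝ) < n := by exact_mod_cast hn
    have hid : c n - c (n+1) = (e n - 1) * (((n:ℕ):ℂ)⁻¹ - ((n+1:ℕ):ℂ)⁻¹)
        + (e n - e (n+1)) * ((n+1:ℕ):ℂ)⁻¹ := by
      simp only [hc]
      ring
    rw [hid]
    refine le_trans (norm_add_le _ _) ?_
    rw [norm_mul, norm_mul, norm_inv, Complex.norm_natCast]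
    have t1 : ‖e n - 1‖ * ‖((n:ℕ):ℂ)⁻¹ - ((n+1:ℕ):ℂ)⁻¹‖
        ≤ (2*Real.pi*(n:ℝ)* |δ|) * (((n:ℝ))^2)⁻¹ :=
      mul_le_mul (habs_e1 n) (coeff_diff_abs n hn) (norm_nonneg _) (by positivity)
    have t2 : ‖e n - e (n+1)‖ * (((n+1:ℕ):ℝ))⁻¹ ≤ (2*Real.pi* |δ|) * ((n:ℝ))⁻¹ := by
      apply mul_le_mul (habs_ediff n) _ (by positivity) (by positivity)
      push_cast
      exact inv_anti₀ hn0 (by linarith)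
    have t3 : (2*Real.pi*(n:ℝ)* |δ|) * (((n:ℝ))^2)⁻¹ = (2*Real.pi* |δ|) * ((n:ℝ))⁻¹ := by
      field_simp
    calc _ ≤ (2*Real.pi*(n:ℝ)* |δ|) * (((n:ℝ))^2)⁻¹ + (2*Real.pi* |δ|) * ((n:ℝ))⁻¹ :=
          add_le_add t1 t2
      _ = 4*Real.pi* |δ| *((n:ℝ))⁻¹ := by rw [t3]; ring
  have hcM : ‖c (M+1)‖ ≤ 2 * ((M:ℝ))⁻¹ := by
    have hM0 : (0:ℝ) < M := by exact_mod_cast hM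
    rw [hc]
    simp only [norm_mul, norm_inv, Complex.norm_natCast]
    have t1 : ‖e (M+1) - 1‖ ≤ 2 := abs_exp_I_sub_one_le_two _
    have t2 : (((M+1:ℕ):ℝ))⁻¹ ≤ ((M:ℝ))⁻¹ := by
      push_cast
      exact inv_anti₀ hM0 (by linarith)
    exact mul_le_mul t1 t2 (by positivity) (by norm_num)
  -- decomposition
  have step1 : ∀ n : ℕ, a n * c n = f n * Efun t n / n - f n * Efun s n / n := by
    intro n
    have hsplit : Efun t n = Efun s n * e n := by
      rw [he]
      simp only [Efun]
      rw [← Complex.exp_add]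
      congr 1
      rw [hδ]
      push_cast
      ring
    rw [ha]
    simp only [hsplit, hc]
    rw [div_eq_mul_inv, div_eq_mul_inv]
    ring
  have step2 : Pfun f M t - Pfun f M s = ∑ n ∈ Ioc 0 M, a n * c n := by
    rw [Pfun, Pfun, ← Finset.sum_sub_distrib]
    exact Finset.sum_congr rfl fun n _ => (step1 n).symm
  rw [step2, abel_sum_s4 a c M]
  have hSa : ∀ n : ℕ, (∑ k ∈ Ioc 0 n, a k) = Sfun f n s := fun n => rfl
  refine le_trans (norm_add_le _ _) (add_le_add ?_ ?_)
  · calc ‖∑ n ∈ Ioc 0 M, (∑ k ∈ Ioc 0 n, a k) * (c n - c (n+1))‖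
        ≤ ∑ n ∈ Ioc 0 M, ‖(∑ k ∈ Ioc 0 n, a k) * (c n - c (n+1))‖ :=
          norm_sum_le _ _
      _ ≤ ∑ n ∈ Ioc 0 M, 4*Real.pi*C* |δ| * (n:ℝ)^(α-1) := by
          apply Finset.sum_le_sum
          intro n hn
          have hn1 : 1 ≤ n := (Finset.mem_Ioc.mp hn).1
          rw [norm_mul, hSa n]
          calc ‖Sfun f n s‖ * ‖c n - c (n+1)‖
              ≤ (C * (n:ℝ)^α) * (4*Real.pi* |δ| *((n:ℝ))⁻¹) :=
                mul_le_mul (hSb n s) (hc_diff n hn1) (norm_nonneg _) (by positivity)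
            _ = 4*Real.pi*C* |δ| * (n:ℝ)^(α-1) := by rw [rpow_sub_one α n hn1]; ring
      _ = 4*Real.pi*C* |δ| * ∑ n ∈ Ioc 0 M, (n:ℝ)^(α-1) := by rw [Finset.mul_sum]
      _ ≤ 4*Real.pi*C* |δ| * (1 + (M:ℝ)^α/α) := by
          apply mul_le_mul_of_nonneg_left (sum_rpow_head α hα0 hα1 M)
          positivity
  · rw [norm_mul, hSa M]
    calc ‖Sfun f M s‖ * ‖c (M+1)‖
        ≤ (C * (M:ℝ)^α) * (2 * ((M:ℝ))⁻¹) :=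
          mul_le_mul (hSb M s) hcM (norm_nonneg _) (by positivity)
      _ = 2*C*(M:ℝ)^(α-1) := by rw [rpow_sub_one α M hM]; ring

lemma holder_F (f : ℕ → ℂ) (C α : ℝ) (hC : 0 < C) (hα0 : 0 < α) (hα1 : α < 1)
    (hS : ∀ x : ℝ, 1 ≤ x → ∀ t : ℝ,
      ‖∑ n ∈ Finset.Icc 1 ⌊x⌋₊,
        f n * Complex.exp (2 * Real.pi * Complex.I * (n : ℂ) * (t : ℂ))‖ ≤ C * x ^ α)
    (F : ℝ → ℂ)
    (hF : ∀ t : ℝ, Tendsto (fun N : ℕ => ∑ n ∈ Finset.Icc 1 N,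
        f n * Complex.exp (2 * Real.pi * Complex.I * (n : ℂ) * (t : ℂ)) / (n : ℂ))
      atTop (𝓝 (F t))) :
    ∃ K : ℝ, 0 ≤ K ∧ ∀ t ∈ Set.Icc (0:ℝ) 1, ∀ s ∈ Set.Icc (0:ℝ) 1,
      ‖F t - F s‖ ≤ K * |t - s| ^ (1 - α) := by
  have h1α : (0:ℝ) < 1 - α := by linarith
  have hπ := Real.pi_pos
  have hIcc : ∀ N : ℕ, Finset.Icc 1 N = Finset.Ioc 0 N := fun N => Finset.Icc_add_one_left_eq_Ioc 0 N
  have hSb : ∀ (N : ℕ) (u : ℝ), ‖Sfun f N u‖ ≤ C * (N:ℝ)^α := by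
    intro N u
    rcases Nat.eq_zero_or_pos N with h0 | hN
    · subst h0
      simp [Sfun, Real.zero_rpow hα0.ne']
    · have h := hS (N:ℝ) (by exact_mod_cast hN) u
      rw [Nat.floor_natCast, hIcc] at h
      simpa [Sfun, Efun] using h
  have hF' : ∀ u : ℝ, Tendsto (fun N => Pfun f N u) atTop (𝓝 (F u)) := by
    intro u
    refine (hF u).congr fun N => ?_
    rw [hIcc]
    rfl
  have hinv : (0:ℝ) < 1/(1-α) := by positivity
  refine ⟨2*C*(1 + 1/(1-α)) + 2*C + 4*Real.pi*C + 8*Real.pi*C/α, ?_, ?_⟩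
  · have p1 : (0:ℝ) ≤ 2*C*(1 + 1/(1-α)) := by nlinarith
    have p2 : (0:ℝ) ≤ 4*Real.pi*C := by positivity
    have p3 : (0:ℝ) ≤ 8*Real.pi*C/α := by positivity
    linarith
  intro t ht s hs
  rcases eq_or_ne t s with heq | hne
  · simp [heq, Real.zero_rpow h1α.ne']
  · set h := |t - s| with hh
    have hh0 : 0 < h := abs_pos.mpr (sub_ne_zero.mpr hne)
    have hh1 : h ≤ 1 := by
      rw [hh]
      rw [abs_le]
      constructor
      · linarith [ht.1, hs.2]
      · linarith [ht.2, hs.1]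
    set M := ⌈1/h⌉₊ with hMdef
    have hM1 : 1 ≤ M := Nat.one_le_ceil_iff.mpr (by positivity)
    have hM0 : (0:ℝ) < M := by exact_mod_cast hM1
    have hMge : 1/h ≤ (M:ℝ) := Nat.le_ceil _
    have hMle : (M:ℝ) ≤ 2/h := by
      have h1 : (M:ℝ) < 1/h + 1 := Nat.ceil_lt_add_one (by positivity)
      have h2 : (1:ℝ) ≤ 1/h := (le_div_iff₀ hh0).mpr (by linarith)
      have h3 : (2:ℝ)/h = 1/h + 1/h := by ring
      linarith
    have hA := tail_est f C α hC hα0 hα1 hSb F hF' M hM1 t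
    have hA' := tail_est f C α hC hα0 hα1 hSb F hF' M hM1 s
    have hB := head_est f C α hC hα0 hα1 hSb M hM1 t s
    have hY : (M:ℝ)^(α-1) ≤ h^(1-α) := by
      have d1 : (M:ℝ)^(α-1) ≤ (1/h)^(α-1) :=
        Real.rpow_le_rpow_of_nonpos (by positivity) hMge (by linarith)
      have d2 : (1/h)^(α-1) = h^(1-α) := by
        rw [one_div, Real.inv_rpow hh0.le, ← Real.rpow_neg hh0.le]
        norm_num
      linarith [d2 ▸ d1]
    have hMα : (M:ℝ)^α ≤ 2 * h^(-α) := by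
      calc (M:ℝ)^α ≤ (2/h)^α := Real.rpow_le_rpow hM0.le hMle hα0.le
        _ = 2^α * h^(-α) := by
            rw [Real.div_rpow (by norm_num) hh0.le, div_eq_mul_inv, ← Real.rpow_neg hh0.le]
        _ ≤ 2 * h^(-α) := by
            have : (2:ℝ)^α ≤ 2 := by
              have := Real.rpow_le_rpow_of_exponent_le (by norm_num : (1:ℝ) ≤ 2) hα1.le
              rwa [Real.rpow_one] at this
            exact mul_le_mul_of_nonneg_right this (Real.rpow_nonneg hh0.le _)
    have hhh : h * h^(-α) = h^(1-α) := by
      rw [show (1-α) = 1 + (-α) by ring, Real.rpow_add hh0, Real.rpow_one]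
    have hh3 : h ≤ h^(1-α) := by
      have := Real.rpow_le_rpow_of_exponent_ge hh0 hh1 (show 1-α ≤ 1 by linarith)
      rwa [Real.rpow_one] at this
    have htri : ‖F t - F s‖ ≤ ‖F t - Pfun f M t‖
        + ‖Pfun f M t - Pfun f M s‖ + ‖F s - Pfun f M s‖ := by
      have e : F t - F s = ((F t - Pfun f M t) + (Pfun f M t - Pfun f M s))
          - (F s - Pfun f M s) := by ring
      rw [e]
      exact le_trans (norm_sub_le _ _)
        (add_le_add_left (norm_add_le _ _) _)
    have t1 : h * (M:ℝ)^α ≤ 2*h^(1-α) := by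
      calc h * (M:ℝ)^α ≤ h * (2*h^(-α)) := mul_le_mul_of_nonneg_left hMα hh0.le
        _ = 2*(h*h^(-α)) := by ring
        _ = 2*h^(1-α) := by rw [hhh]
    have e1 : 4*Real.pi*C*h*(1 + (M:ℝ)^α/α)
        ≤ (4*Real.pi*C + 8*Real.pi*C/α) * h^(1-α) := by
      calc 4*Real.pi*C*h*(1 + (M:ℝ)^α/α)
          = 4*Real.pi*C*h + (4*Real.pi*C/α)*(h*(M:ℝ)^α) := by
            field_simp
        _ ≤ 4*Real.pi*C*h^(1-α) + (4*Real.pi*C/α)*(2*h^(1-α)) :=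
            add_le_add (mul_le_mul_of_nonneg_left hh3 (by positivity))
              (mul_le_mul_of_nonneg_left t1 (by positivity))
        _ = (4*Real.pi*C + 8*Real.pi*C/α) * h^(1-α) := by ring
    have hCpos : (0:ℝ) ≤ C * (1 + 1/(1-α)) := by nlinarith
    have c1 : C * (1 + 1/(1-α)) * (M:ℝ)^(α-1) ≤ C * (1 + 1/(1-α)) * h^(1-α) :=
      mul_le_mul_of_nonneg_left hY hCpos
    have c2 : 2*C*(M:ℝ)^(α-1) ≤ 2*C*h^(1-α) :=
      mul_le_mul_of_nonneg_left hY (by positivity)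
    calc ‖F t - F s‖
        ≤ ‖F t - Pfun f M t‖ + ‖Pfun f M t - Pfun f M s‖
          + ‖F s - Pfun f M s‖ := htri
      _ ≤ (C * (1 + 1/(1-α)) * h^(1-α))
          + ((4*Real.pi*C + 8*Real.pi*C/α) * h^(1-α) + 2*C*h^(1-α))
          + (C * (1 + 1/(1-α)) * h^(1-α)) := by
          refine add_le_add (add_le_add (le_trans hA c1) ?_) (le_trans hA' c1)
          calc ‖Pfun f M t - Pfun f M s‖
              ≤ 4*Real.pi*C*h*(1 + (M:ℝ)^α/α) + 2*C*(M:ℝ)^(α-1) := hB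
            _ ≤ (4*Real.pi*C + 8*Real.pi*C/α) * h^(1-α) + 2*C*h^(1-α) :=
                add_le_add e1 c2
      _ = (2*C*(1 + 1/(1-α)) + 2*C + 4*Real.pi*C + 8*Real.pi*C/α) * h^(1-α) := by ring


/-- Under the uniform exponential sum bound `|S(x,t)| ≤ C x^α`, the Hausdorff
dimensions of the graphs of `|F|`, `Re F`, `Im F` over `[0,1]` are at most `1 + α`. -/
theorem stmt_4 (f : ℕ → ℂ) (C α : ℝ) (hC : 0 < C) (hα0 : 0 < α) (hα1 : α < 1)
    (hS : ∀ x : ℝ, 1 ≤ x → ∀ t : ℝ,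
      ‖∑ n ∈ Finset.Icc 1 ⌊x⌋₊,
        f n * Complex.exp (2 * Real.pi * Complex.I * (n : ℂ) * (t : ℂ))‖ ≤ C * x ^ α)
    (F : ℝ → ℂ)
    (hF : ∀ t : ℝ, Tendsto (fun N : ℕ => ∑ n ∈ Finset.Icc 1 N,
        f n * Complex.exp (2 * Real.pi * Complex.I * (n : ℂ) * (t : ℂ)) / (n : ℂ))
      atTop (𝓝 (F t))) :
    dimH {p : ℝ × ℝ | p.1 ∈ Set.Icc (0 : ℝ) 1 ∧ p.2 = ‖F p.1‖}
        ≤ ENNReal.ofReal (1 + α) ∧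
    dimH {p : ℝ × ℝ | p.1 ∈ Set.Icc (0 : ℝ) 1 ∧ p.2 = (F p.1).re}
        ≤ ENNReal.ofReal (1 + α) ∧
    dimH {p : ℝ × ℝ | p.1 ∈ Set.Icc (0 : ℝ) 1 ∧ p.2 = (F p.1).im}
        ≤ ENNReal.ofReal (1 + α) := by
  obtain ⟨K, hK0, hK⟩ := holder_F f C α hC hα0 hα1 hS F hF
  have hβ0 : (0:ℝ) < 1 - α := by linarith
  have hβ1 : (1:ℝ) - α ≤ 1 := by linarith
  have hrw : (2:ℝ) - (1 - α) = 1 + α := by ring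
  refine ⟨?_, ?_, ?_⟩
  · have hg : ∀ s ∈ Set.Icc (0:ℝ) 1, ∀ t ∈ Set.Icc (0:ℝ) 1,
        |‖F t‖ - ‖F s‖| ≤ K * |t - s| ^ (1 - α) :=
      fun s hs t ht => le_trans (abs_norm_sub_norm_le _ _) (hK t ht s hs)
    have := dimH_graph_le (fun u => ‖F u‖) K (1 - α) hK0 hβ0 hβ1 hg
    rwa [hrw] at this
  · have hg : ∀ s ∈ Set.Icc (0:ℝ) 1, ∀ t ∈ Set.Icc (0:ℝ) 1,
        |(F t).re - (F s).re| ≤ K * |t - s| ^ (1 - α) := by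
      intro s hs t ht
      refine le_trans ?_ (hK t ht s hs)
      rw [← Complex.sub_re]
      exact Complex.abs_re_le_norm _
    have := dimH_graph_le (fun u => (F u).re) K (1 - α) hK0 hβ0 hβ1 hg
    rwa [hrw] at this
  · have hg : ∀ s ∈ Set.Icc (0:ℝ) 1, ∀ t ∈ Set.Icc (0:ℝ) 1,
        |(F t).im - (F s).im| ≤ K * |t - s| ^ (1 - α) := by
      intro s hs t ht
      refine le_trans ?_ (hK t ht s hs)
      rw [← Complex.sub_im]
      exact Complex.abs_im_le_norm _
    have := dimH_graph_le (fun u => (F u).im) K (1 - α) hK0 hβ0 hβ1 hg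
    rwa [hrw] at this
end

section
/- Let f : ℕ → ℂ be an arithmetic function and suppose there exist constants C > 0 and α ∈ (0,1) such that |S(x,t)| ≤ C·x^α for all real x ≥ 1 and all t ∈ ℝ. Then the Hausdorff dimension of the image F([0,1]) = {F(t) : t ∈ [0,1]} ⊂ ℂ is at most 1/(1−α). -/
open Filter Finset Topology
open scoped ENNReal NNReal

namespace Stmt5Aux

noncomputable def Sp (f : ℕ → ℂ) (N : ℕ) (t : ℝ) : ℂ :=
  ∑ n ∈ Finset.Icc 1 N, f n * Complex.exp (2 * Real.pi * Complex.I * (n : ℂ) * (t : ℂ))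

noncomputable def Pp (f : ℕ → ℂ) (N : ℕ) (t : ℝ) : ℂ :=
  ∑ n ∈ Finset.Icc 1 N, f n * Complex.exp (2 * Real.pi * Complex.I * (n : ℂ) * (t : ℂ)) / (n : ℂ)

lemma sumpow (α : ℝ) (hα0 : 0 < α) (hα1 : α < 1) (N L : ℕ) (hN : 1 ≤ N) :
    ∑ i ∈ Finset.Ioc N L, (i:ℝ) ^ (α - 2) ≤ (N:ℝ) ^ (α - 1) / (1 - α) := by
  have h1α : (0:ℝ) < 1 - α := by linarith
  have hN0 : (0:ℝ) < N := by exact_mod_cast hN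
  rcases le_or_gt L N with h | h
  · rw [Finset.Ioc_eq_empty (by omega), Finset.sum_empty]
    positivity
  · set a : ℕ := L - N with ha
    have hset : ∑ i ∈ Finset.Ioc N L, (i:ℝ) ^ (α - 2)
        = ∑ i ∈ Finset.range a, ((N:ℝ) + ((i:ℕ) + 1 : ℕ)) ^ (α - 2) := by
      rw [← Finset.Ico_add_one_add_one_eq_Ioc, Finset.sum_Ico_eq_sum_range]
      apply Finset.sum_congr (by rw [ha]; congr 1; omega) fun i _ => by push_cast; ring_nf
    have anti : AntitoneOn (fun x : ℝ => x ^ (α - 2)) (Set.Icc (N:ℝ) ((N:ℝ) + a)) := by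
      intro x hx y hy hxy
      exact Real.rpow_le_rpow_of_nonpos (lt_of_lt_of_le hN0 hx.1) hxy (by linarith)
    have hint := anti.sum_le_integral
    rw [hset]
    refine hint.trans ?_
    have hval : (∫ x in (N:ℝ)..((N:ℝ) + a), x ^ (α - 2))
        = (((N:ℝ) + a) ^ (α - 1) - (N:ℝ) ^ (α - 1)) / (α - 1) := by
      rw [integral_rpow (Or.inr ⟨by intro hc; rw [show α - 2 = -1 ↔ α = 1 by constructor <;> intro <;> linarith] at hc; linarith,
        by
          rw [Set.uIcc_of_le (le_add_of_nonneg_right (Nat.cast_nonneg a))]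
          intro hc
          exact absurd (Set.mem_Icc.mp hc).1 (by push_neg; linarith)⟩)]
      rw [show α - 2 + 1 = α - 1 by ring]
    rw [hval]
    have hpos : (0:ℝ) ≤ ((N:ℝ) + a) ^ (α - 1) := Real.rpow_nonneg (by positivity) _
    have : (((N:ℝ) + a) ^ (α - 1) - (N:ℝ) ^ (α - 1)) / (α - 1)
        = ((N:ℝ) ^ (α - 1) - ((N:ℝ) + a) ^ (α - 1)) / (1 - α) := by
      rw [show (1 - α) = -(α - 1) by ring, div_neg, ← neg_div]
      ring_nf
    rw [this]
    gcongr
    linarith [hpos]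

lemma head (f : ℕ → ℂ) (C α : ℝ)
    (hSb : ∀ N : ℕ, ∀ t : ℝ, ‖Sp f N t‖ ≤ C * (N:ℝ) ^ α)
    (N : ℕ) (s t : ℝ) :
    ‖Pp f N t - Pp f N s‖ ≤ 2 * Real.pi * (C * (N:ℝ) ^ α) * |t - s| := by
  have key : ∀ n ∈ Finset.Icc 1 N,
      f n * Complex.exp (2 * Real.pi * Complex.I * (n : ℂ) * (t : ℂ)) / n
        - f n * Complex.exp (2 * Real.pi * Complex.I * (n : ℂ) * (s : ℂ)) / n
      = ∫ u in s..t, 2 * (Real.pi:ℂ) * Complex.I *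
          (f n * Complex.exp (2 * Real.pi * Complex.I * (n : ℂ) * (u : ℂ))) := by
    intro n hn
    have hn1 : 1 ≤ n := (Finset.mem_Icc.mp hn).1
    have hnne : (n:ℂ) ≠ 0 := Nat.cast_ne_zero.2 (by omega)
    have hπ : ((Real.pi : ℝ) : ℂ) ≠ 0 := Complex.ofReal_ne_zero.2 Real.pi_ne_zero
    set c : ℂ := 2 * Real.pi * Complex.I * (n:ℂ) with hc
    have hcne : c ≠ 0 :=
      mul_ne_zero (mul_ne_zero (mul_ne_zero two_ne_zero hπ) Complex.I_ne_zero) hnne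
    have hint := integral_exp_mul_complex (a := s) (b := t) hcne
    calc f n * Complex.exp (c * t) / n - f n * Complex.exp (c * s) / n
        = 2 * (Real.pi:ℂ) * Complex.I * f n *
            ((Complex.exp (c * t) - Complex.exp (c * s)) / c) := by
          rw [hc]; field_simp
      _ = 2 * (Real.pi:ℂ) * Complex.I * f n * ∫ u in s..t, Complex.exp (c * u) := by rw [hint]
      _ = ∫ u in s..t, 2 * (Real.pi:ℂ) * Complex.I * (f n * Complex.exp (c * u)) := by
          rw [← intervalIntegral.integral_const_mul]
          congr 1; funext u; ring
  have hcont : ∀ n : ℕ, Continuous fun u : ℝ => 2 * (Real.pi:ℂ) * Complex.I *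
      (f n * Complex.exp (2 * Real.pi * Complex.I * (n : ℂ) * (u : ℂ))) := by
    intro n; fun_prop
  have hsum : Pp f N t - Pp f N s = ∫ u in s..t, 2 * (Real.pi:ℂ) * Complex.I * Sp f N u := by
    rw [Pp, Pp, ← Finset.sum_sub_distrib, Finset.sum_congr rfl key,
      ← intervalIntegral.integral_finset_sum
        (fun n _ => ((hcont n).intervalIntegrable _ _))]
    congr 1; funext u; rw [Sp, Finset.mul_sum]
  rw [hsum]
  have hb : ∀ u ∈ Set.uIoc s t,
      ‖2 * (Real.pi:ℂ) * Complex.I * Sp f N u‖ ≤ 2 * Real.pi * (C * (N:ℝ) ^ α) := by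
    intro u _
    have h1 : ‖(2 * (Real.pi:ℂ) * Complex.I)‖ = 2 * Real.pi := by
      simp [abs_of_pos Real.pi_pos]
    rw [norm_mul, h1]
    exact mul_le_mul_of_nonneg_left (hSb N u) (by positivity)
  calc ‖∫ u in s..t, 2 * (Real.pi:ℂ) * Complex.I * Sp f N u‖
      ≤ 2 * Real.pi * (C * (N:ℝ) ^ α) * |t - s| :=
        intervalIntegral.norm_integral_le_of_norm_le_const hb

lemma tail (f : ℕ → ℂ) (C α : ℝ) (hC : 0 ≤ C) (hα0 : 0 < α) (hα1 : α < 1)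
    (hSb : ∀ N : ℕ, ∀ t : ℝ, ‖Sp f N t‖ ≤ C * (N:ℝ) ^ α)
    (N M : ℕ) (hN : 1 ≤ N) (hNM : N ≤ M) (t : ℝ) :
    ‖Pp f M t - Pp f N t‖ ≤ C * (2 + 1/(1-α)) * (N:ℝ) ^ (α - 1) := by
  have h1α : (0:ℝ) < 1 - α := by linarith
  have hN0 : (0:ℝ) < N := by exact_mod_cast hN
  have hRHS : (0:ℝ) ≤ C * (2 + 1/(1-α)) * (N:ℝ) ^ (α - 1) := by
    apply mul_nonneg (mul_nonneg hC ?_) (Real.rpow_nonneg hN0.le _)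
    have := one_div_pos.mpr h1α
    linarith
  rcases eq_or_lt_of_le hNM with rfl | h
  · simpa using hRHS
  set g : ℕ → ℂ := fun n =>
    if n = 0 then 0 else f n * Complex.exp (2 * Real.pi * Complex.I * (n : ℂ) * (t : ℂ)) with hg
  set a : ℕ → ℂ := fun n => (n:ℂ)⁻¹ with haf
  have hG : ∀ k : ℕ, ∑ i ∈ Finset.range (k+1), g i = Sp f k t := by
    intro k
    rw [Finset.range_eq_Ico, Finset.sum_eq_sum_Ico_succ_bot (Nat.succ_pos k)]
    rw [show Finset.Ico 1 (k+1) = Finset.Icc 1 k from Finset.Ico_add_one_right_eq_Icc 1 k]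
    simp only [hg, if_pos rfl, zero_add, Sp]
    exact Finset.sum_congr rfl fun i hi => if_neg (by have := (Finset.mem_Icc.mp hi).1; omega)
  have hstep : Pp f M t - Pp f N t = ∑ i ∈ Finset.Ioc N M, a i • g i := by
    have e1 : ∀ K : ℕ, Pp f K t = ∑ i ∈ Finset.Ioc 0 K, a i • g i := by
      intro K
      rw [Pp, show Finset.Icc 1 K = Finset.Ioc 0 K from by ext i; simp; omega]
      refine Finset.sum_congr rfl fun i hi => ?_
      have hi1 : 1 ≤ i := (Finset.mem_Ioc.mp hi).1
      simp only [haf, hg, smul_eq_mul, if_neg (by omega : ¬ i = 0)]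
      rw [div_eq_mul_inv]; ring
    rw [e1, e1, ← Finset.sum_Ioc_consecutive _ (Nat.zero_le N) hNM, add_sub_cancel_left]
  rw [hstep, Finset.sum_Ioc_by_parts a g h]
  have habound : ∀ k : ℕ, 1 ≤ k → ‖a k • (∑ i ∈ Finset.range (k+1), g i)‖
      ≤ C * (k:ℝ) ^ (α - 1) := by
    intro k hk
    have hk0 : (0:ℝ) < k := by exact_mod_cast hk
    rw [hG k, norm_smul, haf]
    have h1 : ‖((k:ℕ):ℂ)⁻¹‖ = ((k:ℝ))⁻¹ := by
      rw [norm_inv, Complex.norm_natCast]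
    rw [h1]
    calc ((k:ℝ))⁻¹ * ‖Sp f k t‖ ≤ ((k:ℝ))⁻¹ * (C * (k:ℝ) ^ α) := by
          exact mul_le_mul_of_nonneg_left (hSb k t) (by positivity)
      _ = C * (k:ℝ) ^ (α - 1) := by
          rw [Real.rpow_sub hk0, Real.rpow_one]; ring
  have hb1 : ‖a M • (∑ i ∈ Finset.range (M+1), g i)‖ ≤ C * (N:ℝ) ^ (α - 1) := by
    refine (habound M (by omega)).trans ?_
    exact mul_le_mul_of_nonneg_left
      (Real.rpow_le_rpow_of_nonpos hN0 (by exact_mod_cast hNM) (by linarith)) hC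
  have hb2 : ‖a (N+1) • (∑ i ∈ Finset.range (N+1), g i)‖ ≤ C * (N:ℝ) ^ (α - 1) := by
    rw [hG N, norm_smul, haf]
    have h1 : ‖((N+1:ℕ):ℂ)⁻¹‖ = (((N:ℝ))+1)⁻¹ := by
      rw [norm_inv, Complex.norm_natCast]; push_cast; ring
    rw [h1]
    calc ((N:ℝ)+1)⁻¹ * ‖Sp f N t‖ ≤ ((N:ℝ))⁻¹ * (C * (N:ℝ) ^ α) := by
          apply mul_le_mul ?_ (hSb N t) (norm_nonneg _) (by positivity)
          apply inv_anti₀ hN0; linarith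
      _ = C * (N:ℝ) ^ (α - 1) := by
          rw [Real.rpow_sub hN0, Real.rpow_one]; ring
  have hb3 : ‖∑ i ∈ Finset.Ioc N (M-1), (a (i+1) - a i) • (∑ j ∈ Finset.range (i+1), g j)‖
      ≤ C * ((N:ℝ) ^ (α - 1) / (1 - α)) := by
    refine (norm_sum_le _ _).trans ?_
    have hterm : ∀ i ∈ Finset.Ioc N (M-1),
        ‖(a (i+1) - a i) • (∑ j ∈ Finset.range (i+1), g j)‖ ≤ C * (i:ℝ) ^ (α - 2) := by
      intro i hi
      have hi1 : 1 ≤ i := by have := (Finset.mem_Ioc.mp hi).1; omega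
      have hi0 : (0:ℝ) < i := by exact_mod_cast hi1
      rw [hG, norm_smul]
      have hcast : a (i+1) - a i = (((((i:ℝ))+1)⁻¹ - ((i:ℝ))⁻¹ : ℝ) : ℂ) := by
        simp only [haf]; push_cast; ring
      have hnrm : ‖a (i+1) - a i‖ = ((i:ℝ))⁻¹ - (((i:ℝ))+1)⁻¹ := by
        rw [hcast, Complex.norm_real, Real.norm_eq_abs, abs_sub_comm, abs_of_nonneg]
        apply sub_nonneg.mpr
        apply inv_anti₀ hi0; linarith
      rw [hnrm]
      have hkey : ((i:ℝ))⁻¹ - (((i:ℝ))+1)⁻¹ ≤ (i:ℝ) ^ (-2 : ℝ) := by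
        have h2 : (i:ℝ) ^ (-2:ℝ) = ((i:ℝ) * (i:ℝ))⁻¹ := by
          rw [Real.rpow_neg hi0.le, show (2:ℝ) = ((2:ℕ):ℝ) by norm_num,
            Real.rpow_natCast, sq]
        have h3 : ((i:ℝ))⁻¹ - (((i:ℝ))+1)⁻¹ = ((i:ℝ) * ((i:ℝ)+1))⁻¹ := by
          rw [mul_inv]; field_simp; ring
        rw [h2, h3]
        apply inv_anti₀ (by positivity)
        nlinarith
      calc ((((i:ℝ))⁻¹ - (((i:ℝ))+1)⁻¹)) * ‖Sp f i t‖
          ≤ (i:ℝ) ^ (-2:ℝ) * (C * (i:ℝ) ^ α) := by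
            apply mul_le_mul hkey (hSb i t) (norm_nonneg _) (Real.rpow_nonneg hi0.le _)
        _ = C * (i:ℝ) ^ (α - 2) := by
            rw [show α - 2 = α + (-2) by ring, Real.rpow_add hi0]; ring
    refine (Finset.sum_le_sum hterm).trans ?_
    rw [← Finset.mul_sum]
    exact mul_le_mul_of_nonneg_left (sumpow α hα0 hα1 N (M-1) hN) hC
  calc ‖a M • (∑ i ∈ Finset.range (M+1), g i) - a (N+1) • (∑ i ∈ Finset.range (N+1), g i)
        - ∑ i ∈ Finset.Ioc N (M-1), (a (i+1) - a i) • (∑ j ∈ Finset.range (i+1), g j)‖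
      ≤ ‖a M • (∑ i ∈ Finset.range (M+1), g i)‖ + ‖a (N+1) • (∑ i ∈ Finset.range (N+1), g i)‖
        + ‖∑ i ∈ Finset.Ioc N (M-1), (a (i+1) - a i) • (∑ j ∈ Finset.range (i+1), g j)‖ := by
        refine (norm_sub_le _ _).trans (add_le_add_left (norm_sub_le _ _) _)
    _ ≤ C * (N:ℝ) ^ (α - 1) + C * (N:ℝ) ^ (α - 1) + C * ((N:ℝ) ^ (α - 1) / (1 - α)) :=
        add_le_add (add_le_add hb1 hb2) hb3
    _ = C * (2 + 1/(1-α)) * (N:ℝ) ^ (α - 1) := by ring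

end Stmt5Aux

open Stmt5Aux in
/-- Under the uniform exponential sum bound `|S(x,t)| ≤ C x^α`, the Hausdorff
dimension of the image `F([0,1]) ⊂ ℂ` is at most `1/(1−α)`. -/
theorem stmt_5 (f : ℕ → ℂ) (C α : ℝ) (hC : 0 < C) (hα0 : 0 < α) (hα1 : α < 1)
    (hS : ∀ x : ℝ, 1 ≤ x → ∀ t : ℝ,
      ‖∑ n ∈ Finset.Icc 1 ⌊x⌋₊,
        f n * Complex.exp (2 * Real.pi * Complex.I * (n : ℂ) * (t : ℂ))‖ ≤ C * x ^ α)
    (F : ℝ → ℂ)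
    (hF : ∀ t : ℝ, Tendsto (fun N : ℕ => ∑ n ∈ Finset.Icc 1 N,
        f n * Complex.exp (2 * Real.pi * Complex.I * (n : ℂ) * (t : ℂ)) / (n : ℂ))
      atTop (𝓝 (F t))) :
    dimH (F '' Set.Icc (0 : ℝ) 1) ≤ ENNReal.ofReal (1 / (1 - α)) := by
  have h1α : (0:ℝ) < 1 - α := by linarith
  -- uniform bound for the partial exponential sums
  have hSb : ∀ N : ℕ, ∀ t : ℝ, ‖Sp f N t‖ ≤ C * (N:ℝ) ^ α := by
    intro N t
    rcases Nat.eq_zero_or_pos N with rfl | hN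
    · rw [show Sp f 0 t = 0 from by rw [Sp, Finset.Icc_eq_empty (by omega), Finset.sum_empty],
        norm_zero, Nat.cast_zero, Real.zero_rpow hα0.ne']
      simp
    · have h := hS (N:ℝ) (by exact_mod_cast hN) t
      rwa [Nat.floor_natCast] at h
  set K₀ : ℝ := C * (2 + 1/(1-α)) with hK₀def
  have hK₀ : 0 ≤ K₀ := by
    have := one_div_pos.mpr h1α
    apply mul_nonneg hC.le; linarith
  -- distance from F to the partial sums
  have hFP : ∀ (N : ℕ), 1 ≤ N → ∀ t : ℝ, ‖F t - Pp f N t‖ ≤ K₀ * (N:ℝ) ^ (α - 1) := by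
    intro N hN t
    have hlim : Tendsto (fun M : ℕ => ‖Pp f M t - Pp f N t‖) atTop (𝓝 ‖F t - Pp f N t‖) :=
      (((hF t).sub_const (Pp f N t)).norm)
    refine le_of_tendsto hlim (eventually_atTop.2 ⟨N, fun M hM => ?_⟩)
    exact Stmt5Aux.tail f C α hC.le hα0 hα1 hSb N M hN hM t
  -- the Hölder estimate
  set Kh : ℝ := 2 * K₀ + 4 * Real.pi * C with hKhdef
  have hKh : 0 ≤ Kh := by positivity
  have main : ∀ s t : ℝ, |t - s| ≤ 1 → ‖F t - F s‖ ≤ Kh * |t - s| ^ (1 - α) := by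
    intro s t hts
    rcases eq_or_ne t s with rfl | hne
    · simp [Real.zero_rpow (by linarith : (1:ℝ) - α ≠ 0)]
    have hδ : 0 < |t - s| := abs_pos.mpr (sub_ne_zero.mpr hne)
    set δ : ℝ := |t - s| with hδdef
    set N : ℕ := ⌈1/δ⌉₊ with hNdef
    have hN1 : 1 ≤ N := Nat.one_le_iff_ne_zero.mpr (by
      simp only [hNdef, ne_eq, Nat.ceil_eq_zero, not_le]
      positivity)
    have hNlow : 1/δ ≤ (N:ℝ) := Nat.le_ceil _
    have hinv1 : (1:ℝ) ≤ 1/δ := by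
      rw [le_div_iff₀ hδ]; simpa using hts
    have hNup : (N:ℝ) ≤ 2/δ := by
      have := Nat.ceil_lt_add_one (by positivity : (0:ℝ) ≤ 1/δ)
      have h2 : 1/δ + 1 ≤ 2/δ := by
        rw [show (2:ℝ)/δ = 1/δ + 1/δ by ring]
        linarith
      calc (N:ℝ) ≤ 1/δ + 1 := by rw [hNdef]; exact this.le
        _ ≤ 2/δ := h2
    -- bound the tail pieces
    have f1 : (N:ℝ) ^ (α - 1) ≤ δ ^ (1 - α) := by
      have := Real.rpow_le_rpow_of_nonpos (by positivity : (0:ℝ) < 1/δ) hNlow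
        (by linarith : α - 1 ≤ 0)
      refine this.trans_eq ?_
      rw [one_div, Real.inv_rpow hδ.le, ← Real.rpow_neg hδ.le, neg_sub]
    have f2 : (N:ℝ) ^ α * δ ≤ 2 * δ ^ (1 - α) := by
      have e1 : (N:ℝ) ^ α ≤ (2/δ) ^ α :=
        Real.rpow_le_rpow (Nat.cast_nonneg N) hNup hα0.le
      have e2 : (2/δ) ^ α * δ = 2 ^ α * δ ^ (1 - α) := by
        rw [div_eq_mul_inv, Real.mul_rpow (by norm_num) (by positivity),
          Real.inv_rpow hδ.le, ← Real.rpow_neg hδ.le, mul_assoc,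
          show δ ^ (-α) * δ = δ ^ (-α) * δ ^ (1:ℝ) by rw [Real.rpow_one],
          ← Real.rpow_add hδ]
        ring_nf
      have e3 : (2:ℝ) ^ α ≤ 2 := by
        nth_rewrite 2 [← Real.rpow_one 2]
        exact Real.rpow_le_rpow_of_exponent_le one_le_two hα1.le
      calc (N:ℝ) ^ α * δ ≤ (2/δ) ^ α * δ := by
            exact mul_le_mul_of_nonneg_right e1 hδ.le
        _ = 2 ^ α * δ ^ (1 - α) := e2
        _ ≤ 2 * δ ^ (1 - α) := by
            exact mul_le_mul_of_nonneg_right e3 (Real.rpow_nonneg hδ.le _)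
    have tri : ‖F t - F s‖ ≤ K₀ * (N:ℝ) ^ (α - 1) + 2 * Real.pi * (C * (N:ℝ) ^ α) * δ
        + K₀ * (N:ℝ) ^ (α - 1) := by
      have t1 := hFP N hN1 t
      have t2 := Stmt5Aux.head f C α hSb N s t
      have t3 := hFP N hN1 s
      calc ‖F t - F s‖
          = ‖(F t - Pp f N t) + (Pp f N t - Pp f N s) + (Pp f N s - F s)‖ := by ring_nf
        _ ≤ ‖F t - Pp f N t‖ + ‖Pp f N t - Pp f N s‖ + ‖Pp f N s - F s‖ := by
            exact (norm_add_le _ _).trans (add_le_add_left (norm_add_le _ _) _)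
        _ ≤ K₀ * (N:ℝ) ^ (α - 1) + 2 * Real.pi * (C * (N:ℝ) ^ α) * δ
            + K₀ * (N:ℝ) ^ (α - 1) := by
            refine add_le_add (add_le_add t1 t2) ?_
            rw [norm_sub_rev]; exact t3
    have hπ := Real.pi_pos
    calc ‖F t - F s‖ ≤ K₀ * (N:ℝ) ^ (α - 1) + 2 * Real.pi * (C * (N:ℝ) ^ α) * δ
          + K₀ * (N:ℝ) ^ (α - 1) := tri
      _ ≤ K₀ * δ ^ (1-α) + 2 * Real.pi * C * (2 * δ ^ (1-α)) + K₀ * δ ^ (1-α) := by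
          have g1 := mul_le_mul_of_nonneg_left f1 hK₀
          have g2 := mul_le_mul_of_nonneg_left f2 (by positivity : (0:ℝ) ≤ 2 * Real.pi * C)
          nlinarith [g2]
      _ = Kh * δ ^ (1-α) := by rw [hKhdef]; ring
  -- conclude via Hölder continuity
  set r : ℝ≥0 := Real.toNNReal (1 - α) with hrdef
  have hr : (r : ℝ) = 1 - α := Real.coe_toNNReal _ h1α.le
  have hrpos : 0 < r := Real.toNNReal_pos.mpr h1α
  have holder : HolderOnWith (Real.toNNReal Kh) r F (Set.Icc 0 1) := by
    intro x hx y hy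
    rw [edist_dist, edist_dist, dist_eq_norm, Real.dist_eq]
    have hxy : |x - y| ≤ 1 := by
      exact abs_le.mpr ⟨by linarith [hx.1, hy.2], by linarith [hx.2, hy.1]⟩
    calc ENNReal.ofReal ‖F x - F y‖ ≤ ENNReal.ofReal (Kh * |x - y| ^ (1 - α)) :=
          ENNReal.ofReal_le_ofReal (main y x hxy)
      _ = ENNReal.ofReal Kh * ENNReal.ofReal (|x - y| ^ (1 - α)) :=
          ENNReal.ofReal_mul hKh
      _ = (Real.toNNReal Kh : ℝ≥0∞) * ENNReal.ofReal (|x - y|) ^ (r : ℝ) := by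
          rw [← ENNReal.ofReal_rpow_of_nonneg (abs_nonneg _) h1α.le, hr]
          rfl
  have hdim := holder.dimH_image_le hrpos
  refine hdim.trans ?_
  have hIcc : dimH (Set.Icc (0:ℝ) 1) ≤ 1 :=
    le_trans (dimH_mono (Set.subset_univ _)) (le_of_eq (Real.dimH_univ))
  calc dimH (Set.Icc (0:ℝ) 1) / (r : ℝ≥0∞) ≤ 1 / (r : ℝ≥0∞) :=
        ENNReal.div_le_div_right hIcc _
    _ = ENNReal.ofReal (1 / (1 - α)) := by
        rw [ENNReal.ofReal_div_of_pos h1α, ENNReal.ofReal_one]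
        congr 1
end
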